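/- arXiv:1809.00795 — 7 statements merged into one kernel-verified Lean document; each statement's English description precedes it below -/
import Mathlib

section
/- Let V be an n×n Hermitian-matrix-valued function on ℝ, S an n×n Hermitian-matrix-valued continuously differentiable function, and Φ an n-component complex vector-valued twice differentiable function satisfying -Φ'' + VΦ = EΦ for a real number E. Then for all x, -(d/dx)[Φ† Φ' + Φ† S Φ] + |Φ' + SΦ|² + Φ†(V + S' - S²)Φ = E|Φ|². -/
open Matrix

/-- the basic S-deformation identity for coupled Schrödinger systems. -/
theorem sdeformation_identity (n : ℕ) (V S S' : ℝ → Matrix (Fin n) (Fin n) ℂ)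
    (Φ Φ' Φ'' : ℝ → Fin n → ℂ) (E : ℝ)
    (hV : ∀ x, (V x).IsHermitian)
    (hSherm : ∀ x, (S x).IsHermitian)
    (hSd : ∀ i j, ∀ x : ℝ, HasDerivAt (fun t => S t i j) (S' x i j) x)
    (hΦd : ∀ i, ∀ x : ℝ, HasDerivAt (fun t => Φ t i) (Φ' x i) x)
    (hΦ'd : ∀ i, ∀ x : ℝ, HasDerivAt (fun t => Φ' t i) (Φ'' x i) x)
    (hschr : ∀ x : ℝ, -Φ'' x + V x *ᵥ Φ x = E • Φ x) :
    ∀ x : ℝ,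
      -(deriv (fun t => star (Φ t) ⬝ᵥ Φ' t + star (Φ t) ⬝ᵥ (S t *ᵥ Φ t)) x)
        + star (Φ' x + S x *ᵥ Φ x) ⬝ᵥ (Φ' x + S x *ᵥ Φ x)
        + star (Φ x) ⬝ᵥ ((V x + S' x - S x * S x) *ᵥ Φ x)
      = (E : ℂ) * (star (Φ x) ⬝ᵥ Φ x) := by
  intro x
  -- derivative computation
  have key : HasDerivAt (fun t => star (Φ t) ⬝ᵥ Φ' t + star (Φ t) ⬝ᵥ (S t *ᵥ Φ t))
      ((star (Φ' x) ⬝ᵥ Φ' x + star (Φ x) ⬝ᵥ Φ'' x)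
        + (star (Φ' x) ⬝ᵥ (S x *ᵥ Φ x) + star (Φ x) ⬝ᵥ (S' x *ᵥ Φ x)
          + star (Φ x) ⬝ᵥ (S x *ᵥ Φ' x))) x := by
    simp only [dotProduct, mulVec, Pi.star_apply, Finset.mul_sum, Finset.sum_add_distrib,
      ← Finset.sum_add_distrib]
    refine HasDerivAt.fun_sum fun i _ => ?_
    have h1 : HasDerivAt (fun t => star (Φ t i) * Φ' t i)
        (star (Φ' x i) * Φ' x i + star (Φ x i) * Φ'' x i) x :=
      ((hΦd i x).star).mul (hΦ'd i x)
    have h2 : ∀ j, HasDerivAt (fun t => star (Φ t i) * (S t i j * Φ t j))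
        (star (Φ' x i) * (S x i j * Φ x j)
          + star (Φ x i) * (S' x i j * Φ x j + S x i j * Φ' x j)) x := by
      intro j
      exact ((hΦd i x).star).mul ((hSd i j x).mul (hΦd j x))
    have h3 : HasDerivAt (fun t => ∑ j, star (Φ t i) * (S t i j * Φ t j))
        (∑ j, (star (Φ' x i) * (S x i j * Φ x j)
          + star (Φ x i) * (S' x i j * Φ x j + S x i j * Φ' x j))) x :=
      HasDerivAt.fun_sum fun j _ => h2 j
    have := h1.fun_add h3
    convert this using 1
    simp [Finset.mul_sum, Finset.sum_add_distrib, mul_add]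
    ring
  rw [key.deriv]
  -- expand the quadratic term
  have hS : (S x)ᴴ = S x := (hSherm x)
  have hstar : ∀ u : Fin n → ℂ, star (S x *ᵥ Φ x) ⬝ᵥ u = star (Φ x) ⬝ᵥ (S x *ᵥ u) := by
    intro u
    rw [star_mulVec, hS, ← dotProduct_mulVec]
  have hquad : star (Φ' x + S x *ᵥ Φ x) ⬝ᵥ (Φ' x + S x *ᵥ Φ x)
      = star (Φ' x) ⬝ᵥ Φ' x + star (Φ' x) ⬝ᵥ (S x *ᵥ Φ x)
        + star (Φ x) ⬝ᵥ (S x *ᵥ Φ' x) + star (Φ x) ⬝ᵥ (S x *ᵥ (S x *ᵥ Φ x)) := by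
    simp only [star_add, add_dotProduct, dotProduct_add, hstar]
    ring
  have hVterm : star (Φ x) ⬝ᵥ ((V x + S' x - S x * S x) *ᵥ Φ x)
      = star (Φ x) ⬝ᵥ (V x *ᵥ Φ x) + star (Φ x) ⬝ᵥ (S' x *ᵥ Φ x)
        - star (Φ x) ⬝ᵥ (S x *ᵥ (S x *ᵥ Φ x)) := by
    simp only [sub_mulVec, add_mulVec, dotProduct_add, dotProduct_sub, mulVec_mulVec]
  have hsch : star (Φ x) ⬝ᵥ (V x *ᵥ Φ x) - star (Φ x) ⬝ᵥ Φ'' x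
      = (E : ℂ) * (star (Φ x) ⬝ᵥ Φ x) := by
    have h := congrArg (fun v => star (Φ x) ⬝ᵥ v) (hschr x)
    simp only [dotProduct_add, dotProduct_neg, dotProduct_smul] at h
    rw [show ((E : ℂ) * (star (Φ x) ⬝ᵥ Φ x)) = E • (star (Φ x) ⬝ᵥ Φ x) by
      rw [Complex.real_smul]]
    linear_combination h
  rw [hquad, hVterm]
  linear_combination hsch
end

section
/- Let V be a bounded piecewise-continuous n×n Hermitian-matrix-valued function on ℝ, S a continuous Hermitian-matrix-valued function with piecewise continuous bounded derivative satisfying V + S' - S² = K†K for some matrix-valued function K. Then for any real E < 0 there is no nontrivial square-integrable solution Φ of -Φ'' + VΦ = EΦ with Φ and Φ' vanishing at ±∞. (I.e., the existence of such an S-deformation with nonnegative deformed potential excludes negative-energy bound states.) -/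
set_option maxHeartbeats 1000000

open Matrix

open MeasureTheory Filter Set in
private lemma aux_small_bs (q : ℝ → ℝ) (hq : MeasureTheory.Integrable q) (hq0 : ∀ x, 0 ≤ q x)
    (c d N ε : ℝ) (hε : 0 < ε) : ∃ y, N ≤ y ∧ (c + d * y) * q y < ε := by
  by_contra hcon
  push_neg at hcon
  set D : ℝ := |c| + |d| + 1 with hD
  have hDpos : 0 < D := by positivity
  set N₀ : ℝ := max N 1 with hN₀
  have hN₀pos : (0:ℝ) < N₀ := lt_of_lt_of_le one_pos (le_max_right _ _)
  have hbound : ∀ y ∈ Ioi N₀, (ε / D) * y⁻¹ ≤ q y := by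
    intro y hy
    have hy1 : (1:ℝ) ≤ y := le_of_lt (lt_of_le_of_lt (le_max_right N 1) hy)
    have hyN : N ≤ y := le_of_lt (lt_of_le_of_lt (le_max_left N 1) hy)
    have hy0 : (0:ℝ) < y := lt_of_lt_of_le one_pos hy1
    have h1 : ε ≤ (c + d * y) * q y := hcon y hyN
    have h2 : c + d * y ≤ D * y := by
      have h4 : c ≤ |c| * y := le_trans (le_abs_self c) (by nlinarith [abs_nonneg c])
      have h5 : d * y ≤ |d| * y := by nlinarith [le_abs_self d]
      nlinarith
    have h3 : ε ≤ D * y * q y := le_trans h1 (mul_le_mul_of_nonneg_right h2 (hq0 y))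
    have heq : (ε / D) * y⁻¹ = ε / (D * y) := by field_simp
    rw [heq, div_le_iff₀ (by positivity)]
    nlinarith
  have hint : IntegrableOn (fun y : ℝ => (ε / D) * y⁻¹) (Ioi N₀) := by
    apply Integrable.mono' (hq.integrableOn)
    · exact (measurable_const.mul measurable_inv).aestronglyMeasurable
    · rw [ae_restrict_iff' measurableSet_Ioi]
      filter_upwards with y hy
      have hy0 : (0:ℝ) < y := lt_trans hN₀pos hy
      rw [Real.norm_eq_abs, abs_of_nonneg (by positivity)]
      exact hbound y hy
  have hint2 : IntegrableOn (fun y : ℝ => y ^ (-1 : ℝ)) (Ioi N₀) := by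
    have h6 := hint.const_mul (D / ε)
    have heq : ∀ y ∈ Ioi N₀, D / ε * ((ε / D) * y⁻¹) = y ^ (-1 : ℝ) := by
      intro y hy
      have hy0 : (0:ℝ) < y := lt_trans hN₀pos hy
      rw [Real.rpow_neg_one]
      field_simp
    exact (integrableOn_congr_fun (fun y hy => heq y hy) measurableSet_Ioi).mp h6
  rw [integrableOn_Ioi_rpow_iff hN₀pos] at hint2
  linarith

/-- an S-deformation with nonnegative deformed potential `KᴴK`
excludes negative-energy bound states. -/
theorem no_negative_bound_state_of_sdeformation (n : ℕ)
    (V S S' K : ℝ → Matrix (Fin n) (Fin n) ℂ)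
    (hV : ∀ x, (V x).IsHermitian)
    (hVpc : ∀ x, ∃ lL lR : Matrix (Fin n) (Fin n) ℂ,
      Filter.Tendsto V (nhdsWithin x (Set.Iio x)) (nhds lL) ∧
      Filter.Tendsto V (nhdsWithin x (Set.Ioi x)) (nhds lR))
    (hVbdd : ∃ C : ℝ, ∀ x i j, ‖V x i j‖ ≤ C)
    (hSherm : ∀ x, (S x).IsHermitian)
    (hSd : ∀ i j, ∀ x : ℝ, HasDerivAt (fun t => S t i j) (S' x i j) x)
    (hS'bdd : ∃ C : ℝ, ∀ x i j, ‖S' x i j‖ ≤ C)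
    (hdef : ∀ x, V x + S' x - S x * S x = (K x)ᴴ * K x)
    (E : ℝ) (hE : E < 0)
    (Φ Φ' Φ'' : ℝ → Fin n → ℂ)
    (hΦd : ∀ i, ∀ x : ℝ, HasDerivAt (fun t => Φ t i) (Φ' x i) x)
    (hΦ'd : ∀ i, ∀ x : ℝ, HasDerivAt (fun t => Φ' t i) (Φ'' x i) x)
    (hschr : ∀ x : ℝ, -Φ'' x + V x *ᵥ Φ x = E • Φ x)
    (hL2 : MeasureTheory.Integrable (fun x => ‖Φ x‖ ^ 2))
    (hdecay_top : Filter.Tendsto Φ Filter.atTop (nhds 0))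
    (hdecay_bot : Filter.Tendsto Φ Filter.atBot (nhds 0))
    (hdecay'_top : Filter.Tendsto Φ' Filter.atTop (nhds 0))
    (hdecay'_bot : Filter.Tendsto Φ' Filter.atBot (nhds 0)) :
    Φ = 0 := by
  classical
  open MeasureTheory Filter Set intervalIntegral in
  by_contra hΦne
  -- a point where Φ is nonzero
  have hx₀ : ∃ x₀ i₀, Φ x₀ i₀ ≠ 0 := by
    by_contra hc
    push_neg at hc
    exact hΦne (funext fun x => funext fun i => hc x i)
  obtain ⟨x₀, i₀, hx₀i₀⟩ := hx₀
  -- basic continuity facts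
  have hΦcont : ∀ i, Continuous (fun x => Φ x i) :=
    fun i => continuous_iff_continuousAt.mpr fun x => (hΦd i x).continuousAt
  have hΦ'cont : ∀ i, Continuous (fun x => Φ' x i) :=
    fun i => continuous_iff_continuousAt.mpr fun x => (hΦ'd i x).continuousAt
  have hScont : ∀ i j, Continuous (fun x => S x i j) :=
    fun i j => continuous_iff_continuousAt.mpr fun x => (hSd i j x).continuousAt
  -- the key scalar functions
  set sq : ℝ → ℝ := fun x => ∑ i, Complex.normSq (Φ x i) with hsq_def
  set F : ℝ → ℂ := fun x => star (Φ x) ⬝ᵥ (Φ' x + S x *ᵥ Φ x) with hF_def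
  set g : ℝ → ℝ := fun x => (F x).re with hg_def
  set r : ℝ → ℝ := fun x =>
    (∑ i, Complex.normSq ((Φ' x + S x *ᵥ Φ x) i)) +
      (∑ i, Complex.normSq ((K x *ᵥ Φ x) i)) - E * sq x with hr_def
  have hsq_nonneg : ∀ x, 0 ≤ sq x := fun x =>
    Finset.sum_nonneg fun i _ => Complex.normSq_nonneg _
  have hsq_cont : Continuous sq := by
    apply continuous_finset_sum
    intro i _
    exact Complex.continuous_normSq.comp (hΦcont i)
  -- conversion : star w ⬝ᵥ w = ↑(∑ normSq)
  have hcast : ∀ w : Fin n → ℂ, star w ⬝ᵥ w = ((∑ i, Complex.normSq (w i) : ℝ) : ℂ) := by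
    intro w
    simp only [dotProduct, Pi.star_apply, Complex.ofReal_sum]
    refine Finset.sum_congr rfl fun i _ => ?_
    rw [Complex.normSq_eq_conj_mul_self]
    rfl
  -- Schrödinger equation rearranged
  have hschr' : ∀ x, Φ'' x = V x *ᵥ Φ x - E • Φ x := by
    intro x
    rw [← hschr x]
    abel
  -- the derivative of F is (real and) equal to r
  have hFderiv : ∀ x, HasDerivAt F ((r x : ℝ) : ℂ) x := by
    intro x
    have key : ∀ i, HasDerivAt (fun t => star (Φ t i) * (Φ' t i + ∑ j, S t i j * Φ t j))
        (star (Φ' x i) * (Φ' x i + ∑ j, S x i j * Φ x j)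
          + star (Φ x i) * (Φ'' x i + (∑ j, (S' x i j * Φ x j + S x i j * Φ' x j)))) x := by
      intro i
      exact ((hΦd i x).star.mul ((hΦ'd i x).add
        (HasDerivAt.fun_sum (fun j _ => ((hSd i j x).mul (hΦd j x))))))
    have hsum := HasDerivAt.fun_sum (fun i (_ : i ∈ Finset.univ) => key i)
    have hF' : HasDerivAt F
        (star (Φ' x) ⬝ᵥ (Φ' x + S x *ᵥ Φ x)
          + star (Φ x) ⬝ᵥ (Φ'' x + (S' x *ᵥ Φ x + S x *ᵥ Φ' x))) x := by
      simp only [hF_def, dotProduct, mulVec, Pi.add_apply, Pi.star_apply,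
        Finset.sum_add_distrib] at hsum ⊢
      convert hsum using 2 <;>
        simp [Finset.sum_add_distrib, mul_add, Finset.mul_sum]
    convert hF' using 1
    -- algebraic identity
    set u := Φ x
    set u' := Φ' x
    have hid : star u' ⬝ᵥ (u' + S x *ᵥ u) + star u ⬝ᵥ ((V x *ᵥ u - E • u) + (S' x *ᵥ u + S x *ᵥ u'))
        = star (u' + S x *ᵥ u) ⬝ᵥ (u' + S x *ᵥ u) + star (K x *ᵥ u) ⬝ᵥ (K x *ᵥ u)
          - E • (star u ⬝ᵥ u) := by
      have h1 : star (K x *ᵥ u) ⬝ᵥ (K x *ᵥ u) = star u ⬝ᵥ ((V x + S' x - S x * S x) *ᵥ u) := by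
        rw [star_mulVec, ← dotProduct_mulVec, mulVec_mulVec, ← hdef]
      have h2 : star (S x *ᵥ u) = star u ᵥ* S x := by rw [star_mulVec, (hSherm x).eq]
      rw [h1]
      simp only [star_add, add_dotProduct, dotProduct_add, h2, ← dotProduct_mulVec,
        mulVec_mulVec, add_mulVec, sub_mulVec, dotProduct_sub, dotProduct_smul, dotProduct_neg]
      ring
    rw [hschr' x, hid]
    rw [hcast (u' + S x *ᵥ u), hcast (K x *ᵥ u), hcast u]
    simp only [hr_def, hsq_def, Complex.real_smul]
    push_cast
    ring
  -- derivative of g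
  have hgderiv : ∀ x, HasDerivAt g (r x) x := by
    intro x
    have := (Complex.reCLM.hasFDerivAt (x := F x)).comp_hasDerivAt x (hFderiv x)
    simpa [hg_def, Function.comp_def] using this
  -- h := g + E * ∫₀ˣ sq is monotone
  have hsqii : ∀ a b : ℝ, IntervalIntegrable sq MeasureTheory.volume a b :=
    fun a b => hsq_cont.intervalIntegrable a b
  set Isq : ℝ → ℝ := fun x => ∫ t in (0:ℝ)..x, sq t with hIsq_def
  have hIsqderiv : ∀ x, HasDerivAt Isq (sq x) x := by
    intro x
    exact intervalIntegral.integral_hasDerivAt_right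
      (hsqii 0 x)
      (hsq_cont.aestronglyMeasurable.stronglyMeasurableAtFilter)
      hsq_cont.continuousAt
  set h : ℝ → ℝ := fun x => g x + E * Isq x with hh_def
  have hhderiv : ∀ x, HasDerivAt h (r x + E * sq x) x := by
    intro x
    exact (hgderiv x).add ((hIsqderiv x).const_mul E)
  have hhmono : Monotone h := by
    apply monotone_of_deriv_nonneg
    · exact fun x => (hhderiv x).differentiableAt
    · intro x
      rw [(hhderiv x).deriv]
      have : r x + E * sq x = (∑ i, Complex.normSq ((Φ' x + S x *ᵥ Φ x) i)) +
          (∑ i, Complex.normSq ((K x *ᵥ Φ x) i)) := by rw [hr_def]; ring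
      rw [this]
      have h1 : 0 ≤ ∑ i, Complex.normSq ((Φ' x + S x *ᵥ Φ x) i) :=
        Finset.sum_nonneg fun i _ => Complex.normSq_nonneg _
      have h2 : 0 ≤ ∑ i, Complex.normSq ((K x *ᵥ Φ x) i) :=
        Finset.sum_nonneg fun i _ => Complex.normSq_nonneg _
      linarith
  -- increment inequality
  have hincr : ∀ x y, x ≤ y → (-E) * ∫ t in x..y, sq t ≤ g y - g x := by
    intro x y hxy
    have h1 : h x ≤ h y := hhmono hxy
    have h2 : Isq y - Isq x = ∫ t in x..y, sq t := by
      have := intervalIntegral.integral_add_adjacent_intervals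
        (hsqii 0 x) (hsqii x y)
      rw [hIsq_def]
      simp only [← this]
      ring
    rw [hh_def] at h1
    simp only at h1
    nlinarith [h2]
  -- a window around x₀ with positive integral of sq
  have hsqx₀ : 0 < sq x₀ := by
    have h1 : Complex.normSq (Φ x₀ i₀) ≤ sq x₀ :=
      Finset.single_le_sum (fun i _ => Complex.normSq_nonneg (Φ x₀ i)) (Finset.mem_univ i₀)
    have h2 : 0 < Complex.normSq (Φ x₀ i₀) := Complex.normSq_pos.mpr hx₀i₀
    linarith
  have hev : ∀ᶠ t in nhds x₀, sq x₀ / 2 < sq t := by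
    have := hsq_cont.continuousAt (x := x₀)
    exact this.eventually_const_lt (by linarith)
  obtain ⟨δ, hδpos, hδ⟩ := Metric.eventually_nhds_iff.mp hev
  set a : ℝ := x₀ - δ / 2 with ha_def
  set b : ℝ := x₀ + δ / 2 with hb_def
  have hab : a ≤ b := by rw [ha_def, hb_def]; linarith
  set δ' : ℝ := ∫ t in a..b, sq t with hδ'_def
  have hδ'pos : 0 < δ' := by
    have hlow : ∀ t ∈ Set.Icc a b, sq x₀ / 2 ≤ sq t := by
      intro t ht
      apply le_of_lt
      apply hδ
      rw [Real.dist_eq]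
      rw [ha_def, hb_def] at ht
      rw [abs_lt]
      constructor <;> [linarith [ht.1]; linarith [ht.2]]
    have hmono' : (∫ t in a..b, (sq x₀ / 2 : ℝ)) ≤ ∫ t in a..b, sq t := by
      apply intervalIntegral.integral_mono_on hab
        (intervalIntegrable_const) (hsqii a b)
      exact hlow
    rw [intervalIntegral.integral_const] at hmono'
    have : (0:ℝ) < (b - a) * (sq x₀ / 2) := by
      apply mul_pos
      · rw [ha_def, hb_def]; linarith
      · linarith
    rw [smul_eq_mul] at hmono'
    rw [hδ'_def]
    linarith
  set ε : ℝ := (-E) * δ' with hε_def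
  have hεpos : 0 < ε := mul_pos (by linarith) hδ'pos
  -- main increment bound on large intervals
  have hkey : ∀ x y, x ≤ a → b ≤ y → ε ≤ g y - g x := by
    intro x y hxa hby
    have hxy : x ≤ y := le_trans (le_trans hxa hab) hby
    have hint1 : δ' ≤ ∫ t in x..y, sq t := by
      have e1 := intervalIntegral.integral_add_adjacent_intervals
        (hsqii x a) (hsqii a y)
      have e2 := intervalIntegral.integral_add_adjacent_intervals
        (hsqii a b) (hsqii b y)
      have n1 : 0 ≤ ∫ t in x..a, sq t :=
        intervalIntegral.integral_nonneg hxa (fun t _ => hsq_nonneg t)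
      have n2 : 0 ≤ ∫ t in b..y, sq t :=
        intervalIntegral.integral_nonneg hby (fun t _ => hsq_nonneg t)
      rw [hδ'_def]
      rw [← e1, ← e2]
      linarith
    have := hincr x y hxy
    have h3 : (-E) * δ' ≤ (-E) * ∫ t in x..y, sq t :=
      mul_le_mul_of_nonneg_left hint1 (by linarith)
    rw [hε_def]
    linarith
  -- bound on S entries
  obtain ⟨C, hC⟩ := hS'bdd
  set C' : ℝ := max C 0 with hC'_def
  have hC'nonneg : 0 ≤ C' := le_max_right _ _
  have hC' : ∀ x i j, ‖S' x i j‖ ≤ C' :=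
    fun x i j => le_trans (hC x i j) (le_max_left _ _)
  have hSgrow : ∀ (x : ℝ) i j, ‖S x i j‖ ≤ ‖S 0 i j‖ + C' * |x| := by
    intro x i j
    have hmv : ‖S x i j - S 0 i j‖ ≤ C' * ‖x - 0‖ := by
      apply Convex.norm_image_sub_le_of_norm_hasDerivWithin_le
        (f := fun t => S t i j) (f' := fun t => S' t i j) (s := Set.univ)
        (fun t _ => (hSd i j t).hasDerivWithinAt) (fun t _ => ?_) convex_univ
        (Set.mem_univ 0) (Set.mem_univ x)
      exact hC' t i j
    rw [sub_zero, Real.norm_eq_abs] at hmv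
    calc ‖S x i j‖ = ‖S 0 i j + (S x i j - S 0 i j)‖ := by ring_nf
    _ ≤ ‖S 0 i j‖ + ‖S x i j - S 0 i j‖ := norm_add_le _ _
    _ ≤ ‖S 0 i j‖ + C' * |x| := by
        linarith
  set M₀ : ℝ := ∑ i, ∑ j, ‖S 0 i j‖ with hM₀_def
  have hM₀nonneg : 0 ≤ M₀ :=
    Finset.sum_nonneg fun i _ => Finset.sum_nonneg fun j _ => norm_nonneg _
  have hSentry : ∀ (x : ℝ) i j, ‖S x i j‖ ≤ M₀ + C' * |x| := by
    intro x i j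
    have h1 : ‖S 0 i j‖ ≤ M₀ := by
      rw [hM₀_def]
      calc ‖S 0 i j‖ ≤ ∑ j', ‖S 0 i j'‖ :=
        Finset.single_le_sum (fun j' _ => norm_nonneg _) (Finset.mem_univ j)
      _ ≤ ∑ i', ∑ j', ‖S 0 i' j'‖ := Finset.single_le_sum
        (f := fun i' => ∑ j', ‖S 0 i' j'‖)
        (fun i' _ => Finset.sum_nonneg fun j' _ => norm_nonneg _) (Finset.mem_univ i)
    linarith [hSgrow x i j]
  -- bound on |g|
  have hgbound : ∀ x : ℝ, |g x| ≤ (n : ℝ) * ‖Φ x‖ * ‖Φ' x‖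
      + ((n:ℝ)^2 * M₀ + (n:ℝ)^2 * C' * |x|) * ‖Φ x‖ ^ 2 := by
    intro x
    set B : ℝ := M₀ + C' * |x| with hB_def
    have hBnonneg : 0 ≤ B := by
      rw [hB_def]; positivity
    have hcomp : ∀ i, ‖Φ x i‖ ≤ ‖Φ x‖ := by
      intro i; exact norm_le_pi_norm (Φ x) i
    have hcomp' : ∀ i, ‖Φ' x i‖ ≤ ‖Φ' x‖ := by
      intro i; exact norm_le_pi_norm (Φ' x) i
    have hΦnn : (0:ℝ) ≤ ‖Φ x‖ := norm_nonneg _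
    have hΦ'nn : (0:ℝ) ≤ ‖Φ' x‖ := norm_nonneg _
    have hterm : ∀ i, ‖star (Φ x i) * ((Φ' x + S x *ᵥ Φ x) i)‖
        ≤ ‖Φ x‖ * (‖Φ' x‖ + (n:ℝ) * B * ‖Φ x‖) := by
      intro i
      rw [norm_mul]
      have e1 : ‖star (Φ x i)‖ = ‖Φ x i‖ := by
        simp
      rw [e1]
      have hinner : ‖(Φ' x + S x *ᵥ Φ x) i‖
          ≤ ‖Φ' x‖ + (n:ℝ) * B * ‖Φ x‖ := by
        simp only [Pi.add_apply, mulVec, dotProduct]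
        calc ‖Φ' x i + ∑ j, S x i j * Φ x j‖
            ≤ ‖Φ' x i‖ + ‖∑ j, S x i j * Φ x j‖ :=
              norm_add_le _ _
        _ ≤ ‖Φ' x‖ + ∑ j, ‖S x i j * Φ x j‖ := by
              exact add_le_add (hcomp' i)
                (norm_sum_le Finset.univ (fun j => S x i j * Φ x j))
        _ ≤ ‖Φ' x‖ + ∑ _j : Fin n, B * ‖Φ x‖ := by
              gcongr with j _
              rw [norm_mul]
              have := hSentry x i j
              exact mul_le_mul (by rw [← hB_def] at this; exact this) (hcomp j)
                (norm_nonneg _) hBnonneg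
        _ = ‖Φ' x‖ + (n:ℝ) * B * ‖Φ x‖ := by
              rw [Finset.sum_const, Finset.card_univ, Fintype.card_fin, nsmul_eq_mul]
              ring
      exact mul_le_mul (hcomp i) hinner (norm_nonneg _) hΦnn
    have h1 : |g x| ≤ ‖F x‖ := by
      rw [hg_def]
      exact Complex.abs_re_le_norm (F x)
    have h2 : ‖F x‖ ≤ (n:ℝ) * (‖Φ x‖ * (‖Φ' x‖ + (n:ℝ) * B * ‖Φ x‖)) := by
      rw [hF_def]
      calc ‖star (Φ x) ⬝ᵥ (Φ' x + S x *ᵥ Φ x)‖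
          ≤ ∑ i, ‖star (Φ x i) * ((Φ' x + S x *ᵥ Φ x) i)‖ := by
            simp only [dotProduct, Pi.star_apply]
            exact norm_sum_le _ _
      _ ≤ ∑ _i : Fin n, ‖Φ x‖ * (‖Φ' x‖ + (n:ℝ) * B * ‖Φ x‖) :=
            Finset.sum_le_sum fun i _ => hterm i
      _ = (n:ℝ) * (‖Φ x‖ * (‖Φ' x‖ + (n:ℝ) * B * ‖Φ x‖)) := by
            rw [Finset.sum_const, Finset.card_univ, Fintype.card_fin, nsmul_eq_mul]
    have h3 : (n:ℝ) * (‖Φ x‖ * (‖Φ' x‖ + (n:ℝ) * B * ‖Φ x‖))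
        = (n:ℝ) * ‖Φ x‖ * ‖Φ' x‖ + ((n:ℝ)^2 * M₀ + (n:ℝ)^2 * C' * |x|) * ‖Φ x‖ ^ 2 := by
      rw [hB_def]; ring
    linarith
  -- limits of the first term in the bound
  have hnormtop : Tendsto (fun x => ‖Φ x‖) atTop (nhds 0) := by
    have := (continuous_norm.tendsto (0 : Fin n → ℂ)).comp hdecay_top
    simpa [Function.comp_def] using this
  have hnormbot : Tendsto (fun x => ‖Φ x‖) atBot (nhds 0) := by
    have := (continuous_norm.tendsto (0 : Fin n → ℂ)).comp hdecay_bot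
    simpa [Function.comp_def] using this
  have hnorm'top : Tendsto (fun x => ‖Φ' x‖) atTop (nhds 0) := by
    have := (continuous_norm.tendsto (0 : Fin n → ℂ)).comp hdecay'_top
    simpa [Function.comp_def] using this
  have hnorm'bot : Tendsto (fun x => ‖Φ' x‖) atBot (nhds 0) := by
    have := (continuous_norm.tendsto (0 : Fin n → ℂ)).comp hdecay'_bot
    simpa [Function.comp_def] using this
  have htop1 : Tendsto (fun x => (n:ℝ) * ‖Φ x‖ * ‖Φ' x‖) atTop (nhds 0) := by
    have := ((hnormtop.const_mul (n:ℝ)).mul hnorm'top)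
    simpa using this
  have hbot1 : Tendsto (fun x => (n:ℝ) * ‖Φ x‖ * ‖Φ' x‖) atBot (nhds 0) := by
    have := ((hnormbot.const_mul (n:ℝ)).mul hnorm'bot)
    simpa using this
  -- find a good point y at +∞ with |g y| < ε/2
  have hq0 : ∀ x : ℝ, 0 ≤ ‖Φ x‖ ^ 2 := fun x => by positivity
  obtain ⟨x₂, hx₂⟩ : ∃ x₂ : ℝ, ∀ x ≥ x₂, (n:ℝ) * ‖Φ x‖ * ‖Φ' x‖ < ε / 4 := by
    have h5 : ∀ᶠ x in atTop, (n:ℝ) * ‖Φ x‖ * ‖Φ' x‖ < ε / 4 := by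
      apply htop1.eventually_lt_const
      linarith
    exact eventually_atTop.mp h5
  obtain ⟨y, hyN, hy⟩ := aux_small_bs (fun x => ‖Φ x‖ ^ 2) hL2 hq0
    ((n:ℝ)^2 * M₀) ((n:ℝ)^2 * C') (max (max b x₂) 0) (ε/4) (by linarith)
  have hy0 : (0:ℝ) ≤ y := le_trans (le_max_right _ _) hyN
  have hyb : b ≤ y := le_trans (le_trans (le_max_left _ _) (le_max_left _ _)) hyN
  have hyx₂ : x₂ ≤ y := le_trans (le_trans (le_max_right _ _) (le_max_left _ _)) hyN
  have hgy : |g y| < ε / 2 := by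
    have h6 := hgbound y
    have h7 : |y| = y := abs_of_nonneg hy0
    rw [h7] at h6
    have h8 := hx₂ y hyx₂
    linarith
  -- find a good point at -∞ with |g| < ε/2
  have hL2neg : MeasureTheory.Integrable (fun t => ‖Φ (-t)‖ ^ 2) := by
    have := hL2.comp_mul_left' (R := (-1:ℝ)) (by norm_num)
    simpa [neg_one_mul] using this
  obtain ⟨x₁, hx₁⟩ : ∃ x₁ : ℝ, ∀ x ≤ x₁, (n:ℝ) * ‖Φ x‖ * ‖Φ' x‖ < ε / 4 := by
    have h5 : ∀ᶠ x in atBot, (n:ℝ) * ‖Φ x‖ * ‖Φ' x‖ < ε / 4 := by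
      apply hbot1.eventually_lt_const
      linarith
    exact eventually_atBot.mp h5
  obtain ⟨z, hzN, hz⟩ := aux_small_bs (fun t => ‖Φ (-t)‖ ^ 2) hL2neg (fun t => by positivity)
    ((n:ℝ)^2 * M₀) ((n:ℝ)^2 * C') (max (max (-a) (-x₁)) 0) (ε/4) (by linarith)
  have hz0 : (0:ℝ) ≤ z := le_trans (le_max_right _ _) hzN
  have hza : -z ≤ a := by
    have : -a ≤ z := le_trans (le_trans (le_max_left _ _) (le_max_left _ _)) hzN
    linarith
  have hzx₁ : -z ≤ x₁ := by
    have : -x₁ ≤ z := le_trans (le_trans (le_max_right _ _) (le_max_left _ _)) hzN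
    linarith
  have hgz : |g (-z)| < ε / 2 := by
    have h6 := hgbound (-z)
    have h7 : |(-z)| = z := by rw [abs_neg, abs_of_nonneg hz0]
    rw [h7] at h6
    have h8 := hx₁ (-z) hzx₁
    linarith
  -- contradiction
  have hfinal := hkey (-z) y hza hyb
  have hay := abs_lt.mp hgy
  have haz := abs_lt.mp hgz
  linarith
end

section
/- Let S be a solution of the matrix Riccati equation S' = S² - (V - E) on an interval with V Hermitian-valued and E real. If S(x₀) is Hermitian at some point x₀, then S(x) is Hermitian for all x in the interval. -/
open Matrix

attribute [local instance] Matrix.linftyOpNormedRing Matrix.linftyOpNormedSpace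

private lemma hasDerivAt_matrix {n : ℕ} {M : ℝ → Matrix (Fin n) (Fin n) ℂ}
    {M' : Matrix (Fin n) (Fin n) ℂ} {x : ℝ}
    (h : ∀ i j, HasDerivAt (fun t => M t i j) (M' i j) x) :
    HasDerivAt M M' x := by
  have key : HasDerivAt (fun t => ∑ i : Fin n, ∑ j : Fin n,
      (M t i j) • single i j (1 : ℂ))
      (∑ i : Fin n, ∑ j : Fin n, (M' i j) • single i j (1 : ℂ)) x := by
    refine HasDerivAt.fun_sum fun i _ => HasDerivAt.fun_sum fun j _ => ?_
    exact (h i j).smul_const _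
  have e1 : ∀ (A : Matrix (Fin n) (Fin n) ℂ),
      ∑ i : Fin n, ∑ j : Fin n, (A i j) • single i j (1 : ℂ) = A := by
    intro A
    conv_rhs => rw [matrix_eq_sum_single A]
    refine Finset.sum_congr rfl fun i _ => Finset.sum_congr rfl fun j _ => ?_
    rw [smul_single, smul_eq_mul, mul_one]
  have : (fun t => ∑ i : Fin n, ∑ j : Fin n, (M t i j) • single i j (1 : ℂ)) = M := by
    funext t; exact e1 (M t)
  rw [this, e1] at key
  exact key

/-- a solution of the matrix Riccati equation `S' = S² - (V - E)` which is
Hermitian at one point of an interval is Hermitian on the whole interval. -/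
theorem riccati_hermitian_propagates (n : ℕ) (a b x₀ : ℝ)
    (V S S' : ℝ → Matrix (Fin n) (Fin n) ℂ) (E : ℝ)
    (hV : ∀ x, (V x).IsHermitian)
    (hSd : ∀ i j, ∀ x ∈ Set.Ioo a b, HasDerivAt (fun t => S t i j) (S' x i j) x)
    (heq : ∀ x ∈ Set.Ioo a b,
      S' x = S x * S x - (V x - (E : ℂ) • (1 : Matrix (Fin n) (Fin n) ℂ)))
    (hx₀ : x₀ ∈ Set.Ioo a b) (hherm : (S x₀).IsHermitian) :
    ∀ x ∈ Set.Ioo a b, (S x).IsHermitian := by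
  intro x hx
  -- the difference function
  set D : ℝ → Matrix (Fin n) (Fin n) ℂ := fun t => (S t)ᴴ - S t with hD
  -- derivative of D
  have hDd : ∀ t ∈ Set.Ioo a b, HasDerivAt D ((S t)ᴴ * D t + D t * S t) t := by
    intro t ht
    have hS : HasDerivAt S (S' t) t := hasDerivAt_matrix fun i j => hSd i j t ht
    have hSH : HasDerivAt (fun u => (S u)ᴴ) ((S' t)ᴴ) t := by
      refine hasDerivAt_matrix fun i j => ?_
      simpa [conjTranspose_apply] using (hSd j i t ht).star
    have := hSH.sub hS
    convert this using 1
    case e'_4 => rfl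
    case e'_5 => rfl
    case e'_6 => rfl
    case e'_8 => rfl
    rw [heq t ht]
    have hVh : (V t)ᴴ = V t := hV t
    have h1 : ((E : ℂ) • (1 : Matrix (Fin n) (Fin n) ℂ))ᴴ
        = (E : ℂ) • (1 : Matrix (Fin n) (Fin n) ℂ) := by
      rw [conjTranspose_smul, conjTranspose_one]
      congr 1
      exact Complex.conj_ofReal E
    rw [conjTranspose_sub, conjTranspose_sub, conjTranspose_mul, hVh, h1]
    simp only [hD]
    noncomm_ring
  -- continuity of S on the interval
  have hScont : ∀ t ∈ Set.Ioo a b, ContinuousAt S t := fun t ht =>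
    (hasDerivAt_matrix fun i j => hSd i j t ht).continuousAt
  have hSHcont : ∀ t ∈ Set.Ioo a b, ContinuousAt (fun u => (S u)ᴴ) t := by
    intro t ht
    refine (hasDerivAt_matrix (M' := (S' t)ᴴ) fun i j => ?_).continuousAt
    simpa [conjTranspose_apply] using (hSd j i t ht).star
  -- choose a compact subinterval
  set c : ℝ := (a + min x₀ x) / 2 with hc
  set d : ℝ := (max x₀ x + b) / 2 with hd
  have hac : a < c := by simp only [hc]; cases' min_cases x₀ x with h h <;> linarith [hx₀.1, hx.1]
  have hcm : c < min x₀ x := by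
    simp only [hc]; cases' min_cases x₀ x with h h <;> linarith [hx₀.1, hx.1]
  have hMd : max x₀ x < d := by
    simp only [hd]; cases' max_cases x₀ x with h h <;> linarith [hx₀.2, hx.2]
  have hdb : d < b := by simp only [hd]; cases' max_cases x₀ x with h h <;> linarith [hx₀.2, hx.2]
  have hcd : c ≤ d := le_of_lt (lt_trans (lt_of_lt_of_le hcm (min_le_left _ _))
    (lt_of_le_of_lt (le_max_left _ _) hMd))
  have hsub : Set.Icc c d ⊆ Set.Ioo a b := fun t ht =>
    ⟨lt_of_lt_of_le hac ht.1, lt_of_le_of_lt ht.2 hdb⟩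
  have hx₀cd : x₀ ∈ Set.Ioo c d :=
    ⟨lt_of_lt_of_le hcm (min_le_left _ _), lt_of_le_of_lt (le_max_left _ _) hMd⟩
  have hxcd : x ∈ Set.Ioo c d :=
    ⟨lt_of_lt_of_le hcm (min_le_right _ _), lt_of_le_of_lt (le_max_right _ _) hMd⟩
  -- bound ‖Sᴴ‖ + ‖S‖ on the compact interval
  have hcont : ContinuousOn (fun t => ‖(S t)ᴴ‖ + ‖S t‖) (Set.Icc c d) := by
    apply ContinuousOn.add
    · exact continuous_norm.comp_continuousOn
        (continuousOn_of_forall_continuousAt fun t ht => hSHcont t (hsub ht))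
    · exact continuous_norm.comp_continuousOn
        (continuousOn_of_forall_continuousAt fun t ht => hScont t (hsub ht))
  obtain ⟨C, hC⟩ := isCompact_Icc.exists_bound_of_continuousOn hcont
  set K : NNReal := ⟨max C 0, le_max_right _ _⟩ with hK
  -- the (time-clamped) linear vector field
  set v : ℝ → Matrix (Fin n) (Fin n) ℂ → Matrix (Fin n) (Fin n) ℂ :=
    fun t X => (S (Set.projIcc c d hcd t))ᴴ * X + X * S (Set.projIcc c d hcd t) with hv
  have hlip : ∀ t, LipschitzWith K (v t) := by
    intro t
    apply LipschitzWith.of_dist_le_mul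
    intro X Y
    set A := S (Set.projIcc c d hcd t) with hA
    have hmem : ((Set.projIcc c d hcd t : Set.Icc c d) : ℝ) ∈ Set.Icc c d :=
      (Set.projIcc c d hcd t).2
    have hbound : ‖Aᴴ‖ + ‖A‖ ≤ C := by
      have := hC _ hmem
      calc ‖Aᴴ‖ + ‖A‖ ≤ ‖‖Aᴴ‖ + ‖A‖‖ := le_abs_self _
        _ ≤ C := this
    have : dist (v t X) (v t Y) = ‖Aᴴ * (X - Y) + (X - Y) * A‖ := by
      rw [dist_eq_norm]
      congr 1
      simp only [hv]
      noncomm_ring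
    rw [this]
    calc ‖Aᴴ * (X - Y) + (X - Y) * A‖ ≤ ‖Aᴴ * (X - Y)‖ + ‖(X - Y) * A‖ := norm_add_le _ _
      _ ≤ ‖Aᴴ‖ * ‖X - Y‖ + ‖X - Y‖ * ‖A‖ := add_le_add (norm_mul_le _ _) (norm_mul_le _ _)
      _ = (‖Aᴴ‖ + ‖A‖) * ‖X - Y‖ := by ring
      _ ≤ (K : ℝ) * ‖X - Y‖ := by
          apply mul_le_mul_of_nonneg_right _ (norm_nonneg _)
          exact le_trans hbound (le_max_left _ _)
      _ = (K : ℝ) * dist X Y := by rw [dist_eq_norm]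
  -- uniqueness of the ODE solution: D ≡ 0 on Ioo c d
  have huniq : Set.EqOn D (fun _ => 0) (Set.Ioo c d) := by
    apply ODE_solution_unique_of_mem_Ioo
      (v := v) (s := fun _ => Set.univ) (K := K)
      (fun t _ => (hlip t).lipschitzOnWith) hx₀cd
    · intro t ht
      refine ⟨?_, Set.mem_univ _⟩
      have hproj : Set.projIcc c d hcd t = ⟨t, Set.mem_Icc_of_Ioo ht⟩ :=
        Set.projIcc_of_mem hcd (Set.mem_Icc_of_Ioo ht)
      have : v t (D t) = (S t)ᴴ * D t + D t * S t := by
        simp only [hv, hproj]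
      rw [this]
      exact hDd t (hsub (Set.mem_Icc_of_Ioo ht))
    · intro t ht
      refine ⟨?_, Set.mem_univ _⟩
      have : v t 0 = 0 := by simp [hv]
      rw [this]
      exact hasDerivAt_const t 0
    · simp only [hD]
      rw [hherm.eq, sub_self]
  have hDx : D x = 0 := huniq hxcd
  have : (S x)ᴴ = S x := by
    have := hDx
    simp only [hD] at this
    exact sub_eq_zero.mp this
  exact this
end

section
/- Let S₁ and S₂ be two Hermitian solutions of the matrix Riccati equation V + S' - S² = 0 on an interval, corresponding to energies E₁ < E₂ respectively (i.e., Sᵢ' = Sᵢ² - V + Eᵢ), both continuous on [x₋, x₊]. If S₂(x₋) - S₁(x₋) is positive definite, then S₂(x) - S₁(x) is positive definite for all x ∈ [x₋, x₊]. -/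
open Matrix
open scoped ComplexOrder


lemma riccati_qform_star {k : ℕ} {M : Matrix (Fin k) (Fin k) ℂ} (hM : M.IsHermitian)
    (v : Fin k → ℂ) : star (star v ⬝ᵥ M *ᵥ v) = star v ⬝ᵥ M *ᵥ v := by
  rw [← star_dotProduct, star_mulVec, hM.eq, ← dotProduct_mulVec]

lemma riccati_qform_im {k : ℕ} {M : Matrix (Fin k) (Fin k) ℂ} (hM : M.IsHermitian)
    (v : Fin k → ℂ) : (star v ⬝ᵥ M *ᵥ v).im = 0 :=
  Complex.conj_eq_iff_im.mp (riccati_qform_star hM v)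

lemma riccati_posDef_of_re {k : ℕ} {M : Matrix (Fin k) (Fin k) ℂ} (hM : M.IsHermitian)
    (h : ∀ v : Fin k → ℂ, v ≠ 0 → 0 < (star v ⬝ᵥ M *ᵥ v).re) : M.PosDef := by
  refine PosDef.of_dotProduct_mulVec_pos hM fun v hv => ?_
  rw [Complex.lt_def]
  exact ⟨by simpa using h v hv, by simp [riccati_qform_im hM v]⟩

lemma riccati_re_pos {k : ℕ} {M : Matrix (Fin k) (Fin k) ℂ} (hM : M.PosDef)
    {v : Fin k → ℂ} (hv : v ≠ 0) : 0 < (star v ⬝ᵥ M *ᵥ v).re := by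
  simpa using hM.re_dotProduct_pos hv

lemma riccati_qform_expand {k : ℕ} (M : Matrix (Fin k) (Fin k) ℂ) (v : Fin k → ℂ) :
    star v ⬝ᵥ M *ᵥ v = ∑ i, ∑ j, (starRingEnd ℂ) (v i) * (M i j * v j) := by
  simp [dotProduct, mulVec, Finset.mul_sum, Complex.star_def]

lemma riccati_qform_bound {k : ℕ} (M : Matrix (Fin k) (Fin k) ℂ) {v : Fin k → ℂ}
    (hv : ‖v‖ ≤ 1) : ‖star v ⬝ᵥ M *ᵥ v‖ ≤ ∑ i, ∑ j, ‖M i j‖ := by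
  rw [riccati_qform_expand]
  refine (norm_sum_le _ _).trans (Finset.sum_le_sum fun i _ => ?_)
  refine (norm_sum_le _ _).trans (Finset.sum_le_sum fun j _ => ?_)
  have hvi : ‖v i‖ ≤ 1 := (norm_le_pi_norm v i).trans hv
  have hvj : ‖v j‖ ≤ 1 := (norm_le_pi_norm v j).trans hv
  calc ‖(starRingEnd ℂ) (v i) * (M i j * v j)‖ = ‖v i‖ * (‖M i j‖ * ‖v j‖) := by
        simp [norm_mul]
    _ ≤ 1 * (‖M i j‖ * 1) := by
        refine mul_le_mul hvi (mul_le_mul le_rfl hvj (norm_nonneg _) (norm_nonneg _)) ?_ ?_ <;>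
          positivity
    _ = ‖M i j‖ := by ring

lemma riccati_qform_smul {k : ℕ} (M : Matrix (Fin k) (Fin k) ℂ) (v : Fin k → ℂ) (r : ℝ) :
    star (r • v) ⬝ᵥ M *ᵥ (r • v) = (r * r) • (star v ⬝ᵥ M *ᵥ v) := by
  rw [star_smul, smul_dotProduct, mulVec_smul, dotProduct_smul, star_trivial, smul_smul]

lemma riccati_posDef_eventually {k : ℕ} {s : Set ℝ} {U : ℝ → Matrix (Fin k) (Fin k) ℂ} {x₀ : ℝ}
    (hc : ∀ i j, ContinuousWithinAt (fun t => U t i j) s x₀)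
    (hherm : ∀ x ∈ s, (U x).IsHermitian)
    (hpd : (U x₀).PosDef) :
    ∀ᶠ x in nhdsWithin x₀ s, (U x).PosDef := by
  rcases Nat.eq_zero_or_pos k with hk | hk
  · filter_upwards [self_mem_nhdsWithin] with x hx
    refine ⟨hherm x hx, fun v hv => absurd ?_ hv⟩
    subst hk
    ext i; exact absurd i.2 (by omega)
  -- minimum of the quadratic form on the unit sphere
  set q : (Fin k → ℂ) → ℝ := fun v => (star v ⬝ᵥ U x₀ *ᵥ v).re with hqdef
  have hq : Continuous q := by
    have : Continuous fun v : Fin k → ℂ => star v ⬝ᵥ U x₀ *ᵥ v := by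
      simp only [riccati_qform_expand]
      exact continuous_finset_sum _ fun i _ => continuous_finset_sum _ fun j _ =>
        ((Complex.continuous_conj.comp (continuous_apply i)).mul
          (continuous_const.mul (continuous_apply j)))
    exact Complex.continuous_re.comp this
  have hsne : ((Metric.sphere (0 : Fin k → ℂ) 1)).Nonempty := by
    refine ⟨Pi.single ⟨0, hk⟩ 1, ?_⟩
    simp [Pi.norm_single]
  obtain ⟨w₀, hw₀mem, hmin⟩ :=
    (isCompact_sphere (0 : Fin k → ℂ) 1).exists_isMinOn hsne hq.continuousOn
  have hw₀ : ‖w₀‖ = 1 := by simpa using hw₀mem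
  have hw₀ne : w₀ ≠ 0 := fun h => by simp [h] at hw₀
  have hc0 : 0 < q w₀ := riccati_re_pos hpd hw₀ne
  -- eventual smallness of entrywise deviation
  have hg : Filter.Tendsto (fun x => ∑ i, ∑ j, ‖U x i j - U x₀ i j‖) (nhdsWithin x₀ s)
      (nhds (∑ i : Fin k, ∑ j : Fin k, ‖U x₀ i j - U x₀ i j‖)) :=
    tendsto_finset_sum _ fun i _ => tendsto_finset_sum _ fun j _ =>
      ((hc i j).sub continuousWithinAt_const).norm
  have hev : ∀ᶠ x in nhdsWithin x₀ s, (∑ i, ∑ j, ‖U x i j - U x₀ i j‖) < q w₀ := by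
    refine Filter.Tendsto.eventually_lt_const ?_ hg
    simpa using hc0
  filter_upwards [hev, self_mem_nhdsWithin] with x hx hxs
  refine riccati_posDef_of_re (hherm x hxs) fun v hv => ?_
  have hnv : (0:ℝ) < ‖v‖ := norm_pos_iff.mpr hv
  set w : Fin k → ℂ := (‖v‖⁻¹ : ℝ) • v with hwdef
  have hw : ‖w‖ = 1 := by
    rw [hwdef, norm_smul]
    simp [abs_of_pos (inv_pos.mpr hnv), inv_mul_cancel₀ hnv.ne']
  have hwne : w ≠ 0 := fun h => by simp [h] at hw
  -- bound the difference of quadratic forms at w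
  have hdiff : |(star w ⬝ᵥ U x *ᵥ w).re - q w| ≤ ∑ i, ∑ j, ‖U x i j - U x₀ i j‖ := by
    have h1 : (star w ⬝ᵥ U x *ᵥ w).re - q w = (star w ⬝ᵥ (U x - U x₀) *ᵥ w).re := by
      rw [hqdef]
      simp [sub_mulVec, dotProduct_sub]
    rw [h1]
    refine (Complex.abs_re_le_norm _).trans ?_
    have := riccati_qform_bound (U x - U x₀) (v := w) (le_of_eq hw)
    simpa [Matrix.sub_apply] using this
  have hminw : q w₀ ≤ q w := hmin (by simpa [Metric.mem_sphere] using hw)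
  have hpos_w : 0 < (star w ⬝ᵥ U x *ᵥ w).re := by
    have habs := abs_le.mp hdiff
    linarith [habs.1]
  -- rescale back to v
  have hscale : star v ⬝ᵥ U x *ᵥ v = (‖v‖ * ‖v‖) • (star w ⬝ᵥ U x *ᵥ w) := by
    have : star (‖v‖ • w) ⬝ᵥ U x *ᵥ (‖v‖ • w) = (‖v‖ * ‖v‖) • (star w ⬝ᵥ U x *ᵥ w) :=
      riccati_qform_smul (U x) w ‖v‖
    rw [← this, hwdef, smul_smul, mul_inv_cancel₀ hnv.ne', one_smul]
  rw [hscale]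
  have : ((‖v‖ * ‖v‖ : ℝ) • (star w ⬝ᵥ U x *ᵥ w)).re = (‖v‖*‖v‖) * (star w ⬝ᵥ U x *ᵥ w).re := by
    simp [Complex.smul_re]
  rw [this]
  positivity

/-- Lemma 1: monotonicity in energy of Hermitian Riccati solutions.
If `S₂ - S₁` is positive definite at the left endpoint, it stays positive definite. -/
theorem riccati_energy_monotonicity (n : ℕ) (xm xp : ℝ) (hxx : xm ≤ xp)
    (V S₁ S₂ S₁' S₂' : ℝ → Matrix (Fin n) (Fin n) ℂ) (E₁ E₂ : ℝ) (hE : E₁ < E₂)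
    (hV : ∀ x, (V x).IsHermitian)
    (hVc : ∀ i j, Continuous fun t => V t i j)
    (hH1 : ∀ x ∈ Set.Icc xm xp, (S₁ x).IsHermitian)
    (hH2 : ∀ x ∈ Set.Icc xm xp, (S₂ x).IsHermitian)
    (hd1 : ∀ i j, ∀ x ∈ Set.Icc xm xp,
      HasDerivWithinAt (fun t => S₁ t i j) (S₁' x i j) (Set.Icc xm xp) x)
    (hd2 : ∀ i j, ∀ x ∈ Set.Icc xm xp,
      HasDerivWithinAt (fun t => S₂ t i j) (S₂' x i j) (Set.Icc xm xp) x)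
    (heq1 : ∀ x ∈ Set.Icc xm xp,
      S₁' x = S₁ x * S₁ x - V x + (E₁ : ℂ) • (1 : Matrix (Fin n) (Fin n) ℂ))
    (heq2 : ∀ x ∈ Set.Icc xm xp,
      S₂' x = S₂ x * S₂ x - V x + (E₂ : ℂ) • (1 : Matrix (Fin n) (Fin n) ℂ))
    (hpos : (S₂ xm - S₁ xm).PosDef) :
    ∀ x ∈ Set.Icc xm xp, (S₂ x - S₁ x).PosDef := by
  set s : Set ℝ := Set.Icc xm xp with hs
  have hxm : xm ∈ s := ⟨le_refl xm, hxx⟩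
  have hUherm : ∀ x ∈ s, (S₂ x - S₁ x).IsHermitian := fun x hx => (hH2 x hx).sub (hH1 x hx)
  have hdU : ∀ i j, ∀ x ∈ s, HasDerivWithinAt (fun t => S₂ t i j - S₁ t i j)
      (S₂' x i j - S₁' x i j) s x := fun i j x hx => (hd2 i j x hx).sub (hd1 i j x hx)
  -- derivative of the quadratic form
  have hF : ∀ (v : Fin n → ℂ), ∀ x ∈ s,
      HasDerivWithinAt (fun t => star v ⬝ᵥ (S₂ t - S₁ t) *ᵥ v)
        (star v ⬝ᵥ (S₂' x - S₁' x) *ᵥ v) s x := by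
    intro v x hx
    have key : HasDerivWithinAt
        (fun t => ∑ i, ∑ j, (starRingEnd ℂ) (v i) * ((S₂ t i j - S₁ t i j) * v j))
        (∑ i, ∑ j, (starRingEnd ℂ) (v i) * ((S₂' x i j - S₁' x i j) * v j)) s x :=
      HasDerivWithinAt.fun_sum fun i _ => HasDerivWithinAt.fun_sum fun j _ =>
        ((((hd2 i j x hx).sub (hd1 i j x hx)).mul_const _).const_mul _)
    have e1 : (fun t => star v ⬝ᵥ (S₂ t - S₁ t) *ᵥ v)
        = fun t => ∑ i, ∑ j, (starRingEnd ℂ) (v i) * ((S₂ t i j - S₁ t i j) * v j) := by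
      funext t
      simpa [Matrix.sub_apply] using riccati_qform_expand (S₂ t - S₁ t) v
    have e2 : star v ⬝ᵥ (S₂' x - S₁' x) *ᵥ v
        = ∑ i, ∑ j, (starRingEnd ℂ) (v i) * ((S₂' x i j - S₁' x i j) * v j) := by
      simpa [Matrix.sub_apply] using riccati_qform_expand (S₂' x - S₁' x) v
    rw [e1, e2]; exact key
  set A : Set ℝ := {x | x ∈ s ∧ ∀ y ∈ Set.Icc xm x, (S₂ y - S₁ y).PosDef} with hA
  have hxmA : xm ∈ A := ⟨hxm, fun y hy => by
    have h : y = xm := le_antisymm hy.2 hy.1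
    rwa [h]⟩
  have hAne : A.Nonempty := ⟨xm, hxmA⟩
  have hbdd : BddAbove A := ⟨xp, fun a ha => ha.1.2⟩
  set x₀ := sSup A with hx₀def
  have hx₀m : xm ≤ x₀ := le_csSup hbdd hxmA
  have hx₀p : x₀ ≤ xp := csSup_le hAne fun a ha => ha.1.2
  have hx₀s : x₀ ∈ s := ⟨hx₀m, hx₀p⟩
  have hlt : ∀ y, xm ≤ y → y < x₀ → (S₂ y - S₁ y).PosDef := by
    intro y hy hylt
    obtain ⟨a, haA, hya⟩ := exists_lt_of_lt_csSup hAne hylt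
    exact haA.2 y ⟨hy, hya.le⟩
  -- positive definiteness at x₀
  have hpd0 : (S₂ x₀ - S₁ x₀).PosDef := by
    rcases eq_or_lt_of_le hx₀m with heq | hmlt
    · rw [← heq]; exact hpos
    by_contra hnpd
    have hclos : x₀ ∈ closure (Set.Ico xm x₀) := by
      rw [closure_Ico hmlt.ne]; exact ⟨hx₀m, le_refl x₀⟩
    haveI hne : (nhdsWithin x₀ (Set.Ico xm x₀)).NeBot :=
      mem_closure_iff_nhdsWithin_neBot.mp hclos
    have hIcos : Set.Ico xm x₀ ⊆ s := fun y hy => ⟨hy.1, hy.2.le.trans hx₀p⟩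
    have hpsd : (S₂ x₀ - S₁ x₀).PosSemidef := by
      refine PosSemidef.of_dotProduct_mulVec_nonneg (hUherm x₀ hx₀s) fun v => ?_
      by_cases hv : v = 0
      · simp [hv]
      rw [Complex.le_def]
      constructor
      · have hcw : ContinuousWithinAt (fun t => star v ⬝ᵥ (S₂ t - S₁ t) *ᵥ v) s x₀ :=
          (hF v x₀ hx₀s).continuousWithinAt
        have htend : Filter.Tendsto (fun t => (star v ⬝ᵥ (S₂ t - S₁ t) *ᵥ v).re)
            (nhdsWithin x₀ (Set.Ico xm x₀))
            (nhds ((star v ⬝ᵥ (S₂ x₀ - S₁ x₀) *ᵥ v).re)) :=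
          (Complex.continuous_re.continuousAt.comp_continuousWithinAt hcw).mono_left
            (nhdsWithin_mono _ hIcos)
        have h0le : ∀ᶠ t in nhdsWithin x₀ (Set.Ico xm x₀),
            0 ≤ (star v ⬝ᵥ (S₂ t - S₁ t) *ᵥ v).re := by
          filter_upwards [self_mem_nhdsWithin] with t ht
          exact (riccati_re_pos (hlt t ht.1 ht.2) hv).le
        simpa using ge_of_tendsto htend h0le
      · simp [riccati_qform_im (hUherm x₀ hx₀s) v]
    have hnex : ∃ v, v ≠ 0 ∧ ¬ (0 < star v ⬝ᵥ (S₂ x₀ - S₁ x₀) *ᵥ v) := by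
      by_contra hcon
      push_neg at hcon
      exact hnpd (PosDef.of_dotProduct_mulVec_pos (hUherm x₀ hx₀s) fun v hv => hcon v hv)
    obtain ⟨v, hv, hnotlt⟩ := hnex
    have hz0 : star v ⬝ᵥ (S₂ x₀ - S₁ x₀) *ᵥ v = 0 :=
      ((hpsd.dotProduct_mulVec_nonneg v).lt_or_eq.resolve_left hnotlt).symm
    have hUv : (S₂ x₀ - S₁ x₀) *ᵥ v = 0 := (hpsd.dotProduct_mulVec_zero_iff v).mp hz0
    have hvU : star v ᵥ* (S₂ x₀ - S₁ x₀) = 0 := by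
      have h := congrArg star hUv
      rw [star_mulVec, (hUherm x₀ hx₀s).eq] at h
      simpa using h
    have hv2 : S₂ x₀ *ᵥ v = S₁ x₀ *ᵥ v := by
      have h := hUv; rw [sub_mulVec] at h; exact sub_eq_zero.mp h
    have hv2' : star v ᵥ* S₂ x₀ = star v ᵥ* S₁ x₀ := by
      have h := hvU; rw [vecMul_sub] at h; exact sub_eq_zero.mp h
    have hder : star v ⬝ᵥ (S₂' x₀ - S₁' x₀) *ᵥ v = ((E₂ - E₁ : ℝ) : ℂ) * (star v ⬝ᵥ v) := by
      rw [heq2 x₀ hx₀s, heq1 x₀ hx₀s]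
      have hq2 : star v ⬝ᵥ (S₂ x₀ * S₂ x₀) *ᵥ v = star v ⬝ᵥ (S₁ x₀ * S₁ x₀) *ᵥ v := by
        rw [← mulVec_mulVec, ← mulVec_mulVec, hv2, dotProduct_mulVec, hv2', ← dotProduct_mulVec]
      simp only [sub_mulVec, add_mulVec, dotProduct_sub, dotProduct_add, smul_mulVec,
        one_mulVec, dotProduct_smul, smul_eq_mul]
      rw [hq2]
      push_cast
      ring
    have hvv : (0:ℂ) < star v ⬝ᵥ v := by
      have h := (Matrix.PosDef.one (n := Fin n) (R := ℂ)).dotProduct_mulVec_pos hv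
      simpa [one_mulVec] using h
    have hdpos : 0 < (E₂ - E₁) * (star v ⬝ᵥ v).re := by
      have hre : 0 < (star v ⬝ᵥ v).re := (Complex.lt_def.mp hvv).1
      exact mul_pos (sub_pos.mpr hE) hre
    have hdf : HasDerivWithinAt (fun t => (star v ⬝ᵥ (S₂ t - S₁ t) *ᵥ v).re)
        ((E₂ - E₁) * (star v ⬝ᵥ v).re) s x₀ := by
      have h1 := hF v x₀ hx₀s
      rw [hder] at h1
      have h2 := Complex.reCLM.hasFDerivAt.comp_hasDerivWithinAt x₀ h1
      simpa [Function.comp_def, Complex.re_ofReal_mul] using h2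
    have hslope := hasDerivWithinAt_iff_tendsto_slope.mp hdf
    have hmono : nhdsWithin x₀ (Set.Ico xm x₀) ≤ nhdsWithin x₀ (s \ {x₀}) :=
      nhdsWithin_mono _ (fun y hy => ⟨hIcos hy, by simpa using hy.2.ne⟩)
    have hle : (E₂ - E₁) * (star v ⬝ᵥ v).re ≤ 0 := by
      refine le_of_tendsto (hslope.mono_left hmono) ?_
      filter_upwards [self_mem_nhdsWithin] with t ht
      have hft : 0 < (star v ⬝ᵥ (S₂ t - S₁ t) *ᵥ v).re :=
        riccati_re_pos (hlt t ht.1 ht.2) hv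
      have hsl : slope (fun t => (star v ⬝ᵥ (S₂ t - S₁ t) *ᵥ v).re) x₀ t
          = (star v ⬝ᵥ (S₂ t - S₁ t) *ᵥ v).re / (t - x₀) := by
        rw [slope_def_field, hz0]
        simp
      rw [hsl]
      exact div_nonpos_iff.mpr (Or.inl ⟨hft.le, sub_nonpos.mpr ht.2.le⟩)
    exact absurd hle (not_le.mpr hdpos)
  -- x₀ is the right endpoint
  have hx₀xp : x₀ = xp := by
    by_contra hneq
    have hx₀lt : x₀ < xp := lt_of_le_of_ne hx₀p hneq
    have hcont : ∀ i j, ContinuousWithinAt (fun t => (S₂ t - S₁ t) i j) s x₀ := by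
      intro i j
      simp only [Matrix.sub_apply]
      exact (hdU i j x₀ hx₀s).continuousWithinAt
    have hev := riccati_posDef_eventually (U := fun t => S₂ t - S₁ t) hcont hUherm hpd0
    obtain ⟨ε, hε, hball⟩ := Metric.mem_nhdsWithin_iff.mp hev
    set x₁ := min (x₀ + ε/2) xp with hx₁def
    have hx₀x₁ : x₀ < x₁ := lt_min (by linarith) hx₀lt
    have hx₁p : x₁ ≤ xp := min_le_right _ _
    have hx₁A : x₁ ∈ A := by
      refine ⟨⟨hx₀m.trans hx₀x₁.le, hx₁p⟩, fun y hy => ?_⟩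
      rcases lt_or_ge y x₀ with h | h
      · exact hlt y hy.1 h
      rcases eq_or_lt_of_le h with h' | h'
      · rw [← h']; exact hpd0
      · refine hball ⟨?_, ⟨hy.1, hy.2.trans hx₁p⟩⟩
        rw [Metric.mem_ball, Real.dist_eq, abs_lt]
        have hy1 : y ≤ x₀ + ε/2 := hy.2.trans (min_le_left _ _)
        constructor <;> [linarith; linarith]
    have hcontr : x₁ ≤ x₀ := le_csSup hbdd hx₁A
    exact absurd hcontr (not_le.mpr hx₀x₁)
  -- conclusion
  intro x hx
  have hxle : x ≤ x₀ := by rw [hx₀xp]; exact hx.2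
  rcases lt_or_eq_of_le hxle with h | h
  · exact hlt x hx.1 h
  · rw [h]; exact hpd0
end

section
/- Let S be a continuous Hermitian-matrix-valued solution of S' = S² - V on (x₋, x₊) with V bounded Hermitian-valued, and suppose S blows up as x → x₊⁻. Then an eigenvalue λ of S satisfies λ(x) ~ -1/(x - x₊) → +∞ as x → x₊⁻; more precisely, any eigenvalue λ with unit eigenvector e obeys λ' = λ² - e†Ve, so a divergent eigenvalue diverges to +∞ at a left-approach to a finite point. -/
open Matrix

/-- Lemma 2: an eigenvalue `lam` of a Hermitian Riccati solution `S' = S² - V`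
with unit eigenvector `e` obeys `lam' = lam² - e†Ve`; consequently a divergent eigenvalue
diverges to `+∞` as `x → x₊⁻`. -/
theorem eigenvalue_riccati_blowup (n : ℕ) (xm xp : ℝ) (hxx : xm < xp)
    (V S S' : ℝ → Matrix (Fin n) (Fin n) ℂ)
    (hV : ∀ x, (V x).IsHermitian)
    (hVbdd : ∃ C : ℝ, ∀ x i j, ‖V x i j‖ ≤ C)
    (hSherm : ∀ x ∈ Set.Ioo xm xp, (S x).IsHermitian)
    (hSd : ∀ i j, ∀ x ∈ Set.Ioo xm xp, HasDerivAt (fun t => S t i j) (S' x i j) x)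
    (heq : ∀ x ∈ Set.Ioo xm xp, S' x = S x * S x - V x)
    (lam lam' : ℝ → ℝ) (e e' : ℝ → Fin n → ℂ)
    (heig : ∀ x ∈ Set.Ioo xm xp, S x *ᵥ e x = (lam x : ℂ) • e x)
    (hunit : ∀ x ∈ Set.Ioo xm xp, star (e x) ⬝ᵥ e x = 1)
    (hed : ∀ i, ∀ x ∈ Set.Ioo xm xp, HasDerivAt (fun t => e t i) (e' x i) x)
    (hld : ∀ x ∈ Set.Ioo xm xp, HasDerivAt lam (lam' x) x) :
    (∀ x ∈ Set.Ioo xm xp, lam' x = lam x ^ 2 - (star (e x) ⬝ᵥ (V x *ᵥ e x)).re) ∧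
    (Filter.Tendsto (fun x => |lam x|) (nhdsWithin xp (Set.Iio xp)) Filter.atTop →
      Filter.Tendsto lam (nhdsWithin xp (Set.Iio xp)) Filter.atTop) := by
  have part1 : ∀ x ∈ Set.Ioo xm xp,
      lam' x = lam x ^ 2 - (star (e x) ⬝ᵥ (V x *ᵥ e x)).re := by
    intro x hx
    have hmem : Set.Ioo xm xp ∈ nhds x := isOpen_Ioo.mem_nhds hx
    -- derivative of the (constant) normalization
    have hg : HasDerivAt (fun t => ∑ i, star (e t i) * e t i)
        (∑ i, (star (e' x i) * e x i + star (e x i) * e' x i)) x :=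
      HasDerivAt.fun_sum fun i _ => ((hed i x hx).star).mul (hed i x hx)
    have hg0 : (∑ i, (star (e' x i) * e x i + star (e x i) * e' x i)) = (0 : ℂ) := by
      have hconst : HasDerivAt (fun _ : ℝ => (1 : ℂ)) 0 x := hasDerivAt_const x 1
      have h1 : HasDerivAt (fun t => ∑ i, star (e t i) * e t i) 0 x := by
        apply hconst.congr_of_eventuallyEq
        filter_upwards [hmem] with t ht
        simpa [dotProduct] using hunit t ht
      exact hg.unique h1
    have hzero : star (e' x) ⬝ᵥ e x + star (e x) ⬝ᵥ e' x = 0 := by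
      simpa [dotProduct, Finset.sum_add_distrib] using hg0
    -- derivative of t ↦ e(t)† S(t) e(t)
    have hf : HasDerivAt (fun t => ∑ i, star (e t i) * ∑ j, S t i j * e t j)
        (∑ i, (star (e' x i) * ∑ j, S x i j * e x j
             + star (e x i) * ∑ j, (S' x i j * e x j + S x i j * e' x j))) x :=
      HasDerivAt.fun_sum fun i _ => ((hed i x hx).star).mul
        (HasDerivAt.fun_sum fun j _ => (hSd i j x hx).mul (hed j x hx))
    have hlamC : HasDerivAt (fun t => (lam t : ℂ)) ((lam' x : ℝ) : ℂ) x :=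
      (hld x hx).ofReal_comp
    have hfe : HasDerivAt (fun t => (lam t : ℂ))
        (∑ i, (star (e' x i) * ∑ j, S x i j * e x j
             + star (e x i) * ∑ j, (S' x i j * e x j + S x i j * e' x j))) x := by
      apply hf.congr_of_eventuallyEq
      filter_upwards [hmem] with t ht
      have h1 : star (e t) ⬝ᵥ (S t *ᵥ e t) = (lam t : ℂ) := by
        rw [heig t ht, dotProduct_smul, hunit t ht, smul_eq_mul, mul_one]
      calc (lam t : ℂ) = star (e t) ⬝ᵥ (S t *ᵥ e t) := h1.symm
        _ = ∑ i, star (e t i) * ∑ j, S t i j * e t j := by simp [dotProduct, mulVec]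
    have hD := hlamC.unique hfe
    have hsplit : (∑ i, (star (e' x i) * ∑ j, S x i j * e x j
             + star (e x i) * ∑ j, (S' x i j * e x j + S x i j * e' x j)))
        = star (e' x) ⬝ᵥ (S x *ᵥ e x)
          + (star (e x) ⬝ᵥ (S' x *ᵥ e x) + star (e x) ⬝ᵥ (S x *ᵥ e' x)) := by
      simp [dotProduct, mulVec, Finset.sum_add_distrib, mul_add]
    have hEig := heig x hx
    have hT1 : star (e' x) ⬝ᵥ (S x *ᵥ e x) = (lam x : ℂ) * (star (e' x) ⬝ᵥ e x) := by
      rw [hEig, dotProduct_smul, smul_eq_mul]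
    have hvm : star (e x) ᵥ* S x = (lam x : ℂ) • star (e x) := by
      have h2 := congrArg star hEig
      rw [star_mulVec, (hSherm x hx).eq, star_smul] at h2
      simpa [Complex.star_def, Complex.conj_ofReal] using h2
    have hT3 : star (e x) ⬝ᵥ (S x *ᵥ e' x) = (lam x : ℂ) * (star (e x) ⬝ᵥ e' x) := by
      rw [dotProduct_mulVec, hvm, smul_dotProduct, smul_eq_mul]
    have hT2 : star (e x) ⬝ᵥ (S' x *ᵥ e x)
        = (lam x : ℂ) ^ 2 - star (e x) ⬝ᵥ (V x *ᵥ e x) := by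
      rw [heq x hx, sub_mulVec, dotProduct_sub, ← mulVec_mulVec, hEig, mulVec_smul, hEig,
        dotProduct_smul, dotProduct_smul, hunit x hx]
      simp [smul_eq_mul]; ring
    have hfin : ((lam' x : ℝ) : ℂ) = (lam x : ℂ) ^ 2 - star (e x) ⬝ᵥ (V x *ᵥ e x) := by
      rw [hD, hsplit, hT1, hT2, hT3]
      have hz : (lam x : ℂ) * (star (e' x) ⬝ᵥ e x) + (lam x : ℂ) * (star (e x) ⬝ᵥ e' x) = 0 := by
        rw [← mul_add, hzero, mul_zero]
      linear_combination hz
    have hre := congrArg Complex.re hfin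
    simpa [← Complex.ofReal_pow, Complex.sub_re, Complex.ofReal_re] using hre
  refine ⟨part1, ?_⟩
  intro h
  obtain ⟨C, hC⟩ := hVbdd
  set B : ℝ := (n : ℝ) * ((n : ℝ) * C) with hBdef
  -- eigenvector entries are bounded by 1
  have habs1 : ∀ x ∈ Set.Ioo xm xp, ∀ i, ‖e x i‖ ≤ 1 := by
    intro x hx i
    have h1 : (∑ j, Complex.normSq (e x j) : ℝ) = 1 := by
      have h2 := congrArg Complex.re (hunit x hx)
      simpa [dotProduct, Complex.star_def, ← Complex.normSq_eq_conj_mul_self] using h2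
    have h3 : Complex.normSq (e x i) ≤ 1 := by
      rw [← h1]
      exact Finset.single_le_sum (fun j _ => Complex.normSq_nonneg _) (Finset.mem_univ i)
    nlinarith [norm_nonneg (e x i), Complex.sq_norm (e x i)]
  -- bound on e† V e
  have hqB : ∀ x ∈ Set.Ioo xm xp, |(star (e x) ⬝ᵥ (V x *ᵥ e x)).re| ≤ B := by
    intro x hx
    have hC0 : ∀ i j : Fin n, (0:ℝ) ≤ C := fun i j => (norm_nonneg _).trans (hC x i j)
    calc |(star (e x) ⬝ᵥ (V x *ᵥ e x)).re|
        ≤ ‖star (e x) ⬝ᵥ (V x *ᵥ e x)‖ := Complex.abs_re_le_norm _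
      _ ≤ ∑ i, ‖star (e x i) * ∑ j, V x i j * e x j‖ := by
          rw [show star (e x) ⬝ᵥ (V x *ᵥ e x) = ∑ i, star (e x i) * ∑ j, V x i j * e x j by
            simp [dotProduct, mulVec]]
          exact norm_sum_le _ _
      _ ≤ ∑ i : Fin n, ((n : ℝ) * C) := by
          apply Finset.sum_le_sum
          intro i _
          rw [norm_mul]
          have hs : ‖∑ j, V x i j * e x j‖ ≤ (n : ℝ) * C := by
            calc ‖∑ j, V x i j * e x j‖ ≤ ∑ j, ‖V x i j * e x j‖ :=
                  norm_sum_le _ _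
              _ ≤ ∑ j : Fin n, C := by
                  apply Finset.sum_le_sum
                  intro j _
                  rw [norm_mul]
                  calc ‖V x i j‖ * ‖e x j‖
                      ≤ ‖V x i j‖ * 1 :=
                        mul_le_mul_of_nonneg_left (habs1 x hx j) (norm_nonneg _)
                    _ = ‖V x i j‖ := mul_one _
                    _ ≤ C := hC x i j
              _ = (n : ℝ) * C := by simp [Finset.sum_const, mul_comm]
          calc ‖star (e x i)‖ * ‖∑ j, V x i j * e x j‖
              ≤ 1 * ((n : ℝ) * C) := by
                apply mul_le_mul _ hs (norm_nonneg _) zero_le_one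
                simpa [Complex.star_def] using habs1 x hx i
            _ = (n : ℝ) * C := one_mul _
      _ = B := by simp [hBdef, Finset.sum_const, mul_comm]
  set K : ℝ := Real.sqrt (|B| + 1) with hKdef
  have hK2 : K ^ 2 = |B| + 1 := Real.sq_sqrt (by positivity)
  have hK1 : 1 ≤ K := by
    nlinarith [Real.sqrt_nonneg (|B| + 1), abs_nonneg B]
  have hKpos : 0 < K := lt_of_lt_of_le one_pos hK1
  have hmemIoo : Set.Ioo xm xp ∈ nhdsWithin xp (Set.Iio xp) :=
    Ioo_mem_nhdsLT_of_mem ⟨hxx, le_refl xp⟩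
  have hev : {x | x ∈ Set.Ioo xm xp ∧ K < |lam x|} ∈ nhdsWithin xp (Set.Iio xp) := by
    filter_upwards [hmemIoo, h.eventually_gt_atTop K] with t h1 h2
    exact ⟨h1, h2⟩
  obtain ⟨a, ha, hsub⟩ := mem_nhdsLT_iff_exists_Ioo_subset.mp hev
  have ha' : a < xp := ha
  have hx0 : (a + xp) / 2 ∈ Set.Ioo a xp := ⟨by linarith, by linarith⟩
  set x0 : ℝ := (a + xp) / 2 with hx0def
  have hcont : ContinuousOn lam (Set.Ioo a xp) := fun y hy =>
    ((hld y (hsub hy).1).continuousAt).continuousWithinAt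
  have hsign : (∀ y ∈ Set.Ioo a xp, 0 < lam y) ∨ (∀ y ∈ Set.Ioo a xp, lam y < 0) := by
    by_contra hcon
    push_neg at hcon
    obtain ⟨⟨y1, hy1, hy1'⟩, ⟨y2, hy2, hy2'⟩⟩ := hcon
    have hIcc : ∀ {u v : ℝ}, u ∈ Set.Ioo a xp → v ∈ Set.Ioo a xp →
        Set.Icc u v ⊆ Set.Ioo a xp := fun hu hv => Set.ordConnected_Ioo.out hu hv
    have h0mem : (0 : ℝ) ∈ Set.Icc (lam y1) (lam y2) := ⟨hy1', hy2'⟩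
    rcases le_total y1 y2 with hle | hle
    · obtain ⟨c, hc, hc0⟩ := intermediate_value_Icc hle (hcont.mono (hIcc hy1 hy2)) h0mem
      have hck := (hsub (hIcc hy1 hy2 hc)).2
      rw [hc0] at hck
      simp at hck
      linarith
    · obtain ⟨c, hc, hc0⟩ := intermediate_value_Icc' hle (hcont.mono (hIcc hy2 hy1)) h0mem
      have hck := (hsub (hIcc hy2 hy1 hc)).2
      rw [hc0] at hck
      simp at hck
      linarith
  rcases hsign with hpos | hneg
  · apply h.congr'
    filter_upwards [Ioo_mem_nhdsLT_of_mem (⟨ha', le_refl xp⟩ : xp ∈ Set.Ioc a xp)] with y hy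
    exact abs_of_pos (hpos y hy)
  · exfalso
    have hlt : ∀ y ∈ Set.Ioo a xp, lam y < -K := by
      intro y hy
      have h2 := (hsub hy).2
      rw [abs_of_neg (hneg y hy)] at h2
      linarith
    have hmono : StrictMonoOn lam (Set.Ioo a xp) := by
      apply strictMonoOn_of_deriv_pos (convex_Ioo a xp) hcont
      intro y hy
      rw [interior_Ioo] at hy
      have hyI : y ∈ Set.Ioo xm xp := (hsub hy).1
      rw [(hld y hyI).deriv, part1 y hyI]
      have h4 := hqB y hyI
      have h5 := hlt y hy
      nlinarith [le_abs_self ((star (e y) ⬝ᵥ (V y *ᵥ e y)).re),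
        le_abs_self B, abs_nonneg B,
        mul_pos (show (0:ℝ) < -lam y - K by linarith) (show (0:ℝ) < -lam y + K by nlinarith)]
    have hev2 : ∀ᶠ y in nhdsWithin xp (Set.Iio xp), |lam x0| < |lam y| :=
      h.eventually_gt_atTop _
    have hev3 : ∀ᶠ y in nhdsWithin xp (Set.Iio xp), y ∈ Set.Ioo x0 xp :=
      Ioo_mem_nhdsLT_of_mem ⟨hx0.2, le_refl xp⟩
    obtain ⟨y, hy1, hy2⟩ := (hev2.and hev3).exists
    have hyIoo : y ∈ Set.Ioo a xp := ⟨lt_trans hx0.1 hy2.1, hy2.2⟩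
    have h6 : lam y < 0 := hneg y hyIoo
    have h7 : lam x0 < 0 := hneg x0 hx0
    rw [abs_of_neg h7, abs_of_neg h6] at hy1
    have h8 := hmono hx0 hyIoo hy2.1
    linarith
end

section
/- Let S_L and S_R be Hermitian solutions of V + S' - S² = 0 on ℝ with S_L ≡ 0 and S_R(x) positive definite for all x ≤ -L. Let Λ be an eigenvalue function of S_R - S_L with unit eigenvector e, satisfying Λ' = Λ(Λ + 2e†S_L e). If Λ(x₀) = 0 at some point x₀ > -L, then Λ ≡ 0 on ℝ; hence since Λ > 0 for x ≤ -L, S_R - S_L has no zero eigenvalue anywhere, i.e., S_R(x) - S_L(x) is positive definite for all x. -/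
open Matrix
open Set
open scoped ComplexOrder

/-- Gronwall: a function with `|f'| ≤ K|f|` vanishing at `a` vanishes on `[a,b]`. -/
lemma gron_zero (f f' : ℝ → ℝ) (a b K : ℝ)
    (hd : ∀ x, HasDerivAt f (f' x) x) (h0 : f a = 0)
    (hb : ∀ x ∈ Set.Icc a b, |f' x| ≤ K * |f x|) :
    ∀ x ∈ Set.Icc a b, f x = 0 := by
  intro x hx
  have H := norm_le_gronwallBound_of_norm_deriv_right_le (f := f) (f' := f')
      (δ := 0) (K := K) (ε := 0) (a := a) (b := b)
      (fun y _ => (hd y).continuousAt.continuousWithinAt)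
      (fun y _ => (hd y).hasDerivWithinAt)
      (by simp [h0])
      (fun y hy => by simpa using hb y ⟨hy.1, hy.2.le⟩)
      x hx
  rw [gronwallBound_ε0_δ0] at H
  exact norm_le_zero_iff.mp H

/-- eigenvalues of `S_R - S_L` cannot cross zero. If an eigenvalue path `Λ`
of `S_R - S_L` (with `S_L ≡ 0` and `S_R` positive definite for `x ≤ -L`), obeying
`Λ' = Λ(Λ + 2e†S_L e)`, vanishes at some `x₀ > -L`, then `Λ ≡ 0`; hence, since `Λ > 0`
for `x ≤ -L`, the eigenvalue stays positive everywhere. -/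
theorem eigenvalue_no_zero_crossing (n : ℕ) (L : ℝ) (hL : 0 < L)
    (V SL SR SL' SR' : ℝ → Matrix (Fin n) (Fin n) ℂ)
    (hV : ∀ x, (V x).IsHermitian)
    (hVsupp : ∀ x : ℝ, L ≤ |x| → V x = 0)
    (hHL : ∀ x, (SL x).IsHermitian) (hHR : ∀ x, (SR x).IsHermitian)
    (hdL : ∀ i j, ∀ x : ℝ, HasDerivAt (fun t => SL t i j) (SL' x i j) x)
    (hdR : ∀ i j, ∀ x : ℝ, HasDerivAt (fun t => SR t i j) (SR' x i j) x)
    (heqL : ∀ x : ℝ, V x + SL' x - SL x * SL x = 0)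
    (heqR : ∀ x : ℝ, V x + SR' x - SR x * SR x = 0)
    (hSL0 : ∀ x : ℝ, x ≤ -L → SL x = 0)
    (hSRpos : ∀ x : ℝ, x ≤ -L → (SR x).PosDef)
    (Λ Λ' : ℝ → ℝ) (e : ℝ → Fin n → ℂ)
    (heig : ∀ x : ℝ, (SR x - SL x) *ᵥ e x = (Λ x : ℂ) • e x)
    (hunit : ∀ x : ℝ, star (e x) ⬝ᵥ e x = 1)
    (hΛd : ∀ x : ℝ, HasDerivAt Λ (Λ' x) x)
    (hΛeq : ∀ x : ℝ, Λ' x = Λ x * (Λ x + 2 * (star (e x) ⬝ᵥ (SL x *ᵥ e x)).re))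
    (hΛpos : ∀ x : ℝ, x ≤ -L → 0 < Λ x) :
    ((∃ x₀ : ℝ, -L < x₀ ∧ Λ x₀ = 0) → ∀ x : ℝ, Λ x = 0) ∧ (∀ x : ℝ, 0 < Λ x) := by
  have hΛcont : Continuous Λ := by
    rw [continuous_iff_continuousAt]; exact fun x => (hΛd x).continuousAt
  -- bound on the unit eigenvector entries
  have he1 : ∀ x i, ‖e x i‖ ≤ 1 := by
    intro x i
    have hsum : (∑ j, Complex.normSq (e x j) : ℝ) = 1 := by
      have h2 := congrArg Complex.re (hunit x)
      simpa [dotProduct, Complex.mul_re, Complex.normSq_apply, Pi.star_apply,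
        Complex.star_def, Complex.conj_re, Complex.conj_im, Complex.re_sum] using h2
    have hle : Complex.normSq (e x i) ≤ 1 := by
      rw [← hsum]
      exact Finset.single_le_sum (fun j _ => Complex.normSq_nonneg _) (Finset.mem_univ i)
    rw [Complex.norm_def]
    exact Real.sqrt_le_one.mpr hle
  -- the coefficient bound function
  set B : ℝ → ℝ := fun x => |Λ x| + 2 * ∑ i, ∑ j, ‖SL x i j‖ with hB
  have hBcont : Continuous B := by
    apply (hΛcont.abs).add
    apply Continuous.mul continuous_const
    apply continuous_finset_sum
    intro i _
    apply continuous_finset_sum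
    intro j _
    exact continuous_norm.comp ((hdL i j · |>.continuousAt) |> fun h =>
      continuous_iff_continuousAt.mpr h)
  -- |Λ'| ≤ B * |Λ|
  have hbound : ∀ x, |Λ' x| ≤ B x * |Λ x| := by
    intro x
    rw [hΛeq x, abs_mul, mul_comm (B x)]
    apply mul_le_mul_of_nonneg_left _ (abs_nonneg _)
    have hhx : |2 * (star (e x) ⬝ᵥ (SL x *ᵥ e x)).re|
        ≤ 2 * ∑ i, ∑ j, ‖SL x i j‖ := by
      rw [abs_mul, abs_two]
      apply mul_le_mul_of_nonneg_left _ (by norm_num)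
      calc |(star (e x) ⬝ᵥ (SL x *ᵥ e x)).re|
          ≤ ‖star (e x) ⬝ᵥ (SL x *ᵥ e x)‖ := Complex.abs_re_le_norm _
        _ ≤ ∑ i, ‖star (e x) i * (SL x *ᵥ e x) i‖ := by
            rw [dotProduct]; exact norm_sum_le _ _
        _ ≤ ∑ i, ∑ j, ‖SL x i j‖ := by
            apply Finset.sum_le_sum
            intro i _
            rw [norm_mul]
            calc ‖star (e x) i‖ * ‖(SL x *ᵥ e x) i‖
                ≤ 1 * ‖(SL x *ᵥ e x) i‖ := by
                  apply mul_le_mul_of_nonneg_right _ (norm_nonneg _)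
                  simpa using he1 x i
              _ = ‖∑ j, SL x i j * e x j‖ := by rw [one_mul]; rfl
              _ ≤ ∑ j, ‖SL x i j * e x j‖ := norm_sum_le _ _
              _ ≤ ∑ j, ‖SL x i j‖ := by
                  apply Finset.sum_le_sum
                  intro j _
                  rw [norm_mul]
                  calc ‖SL x i j‖ * ‖e x j‖
                      ≤ ‖SL x i j‖ * 1 :=
                        mul_le_mul_of_nonneg_left (he1 x j) (norm_nonneg _)
                    _ = _ := mul_one _
    calc |Λ x + 2 * (star (e x) ⬝ᵥ (SL x *ᵥ e x)).re|
        ≤ |Λ x| + |2 * (star (e x) ⬝ᵥ (SL x *ᵥ e x)).re| := abs_add_le _ _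
      _ ≤ B x := by rw [hB]; exact add_le_add (le_refl _) hhx
  -- key: if Λ vanishes anywhere, it vanishes everywhere
  have hzero : ∀ x₀ : ℝ, Λ x₀ = 0 → ∀ x : ℝ, Λ x = 0 := by
    intro x₀ h0 x
    rcases le_total x₀ x with hcase | hcase
    · -- forward
      obtain ⟨K, hK⟩ := isCompact_Icc.exists_bound_of_continuousOn
        (s := Icc x₀ x) hBcont.continuousOn
      refine gron_zero Λ Λ' x₀ x K hΛd h0 (fun y hy => ?_) x ⟨hcase, le_refl x⟩
      calc |Λ' y| ≤ B y * |Λ y| := hbound y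
        _ ≤ K * |Λ y| := by
            apply mul_le_mul_of_nonneg_right _ (abs_nonneg _)
            exact (le_abs_self _).trans (hK y hy)
    · -- backward: reflect
      set g : ℝ → ℝ := fun t => Λ (-t) with hg
      set g' : ℝ → ℝ := fun t => -Λ' (-t) with hg'
      have hdg : ∀ t, HasDerivAt g (g' t) t := by
        intro t
        have := (hΛd (-t)).comp t (hasDerivAt_neg t)
        simp only [mul_neg, mul_one] at this; exact this
      obtain ⟨K, hK⟩ := isCompact_Icc.exists_bound_of_continuousOn
        (s := Icc (-x₀) (-x)) (hBcont.comp continuous_neg).continuousOn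
      have hres := gron_zero g g' (-x₀) (-x) K hdg (by simp [hg, h0])
        (fun y hy => by
          calc |g' y| = |Λ' (-y)| := by rw [hg']; exact abs_neg _
            _ ≤ B (-y) * |Λ (-y)| := hbound (-y)
            _ ≤ K * |g y| := by
                apply mul_le_mul_of_nonneg_right _ (abs_nonneg _)
                exact (le_abs_self _).trans (hK y hy))
        (-x) ⟨neg_le_neg hcase, le_refl _⟩
      simpa [hg] using hres
  constructor
  · rintro ⟨x₀, _, h0⟩
    exact hzero x₀ h0
  · intro x
    by_contra hle
    push_neg at hle
    have hx : -L < x := by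
      by_contra hxx
      push_neg at hxx
      exact absurd (hΛpos x hxx) (not_lt.mpr hle)
    have h0L : (0 : ℝ) ∈ Icc (Λ x) (Λ (-L)) := ⟨hle, (hΛpos (-L) le_rfl).le⟩
    obtain ⟨x₀, hx₀mem, hx₀⟩ := intermediate_value_Icc' hx.le hΛcont.continuousOn h0L
    have := hzero x₀ hx₀ (-L)
    exact absurd this (ne_of_gt (hΛpos (-L) le_rfl))
end

section
/- Let V be a positive-definite Hermitian-matrix-valued continuous bounded function on ℝ, and let S be a Hermitian solution of V + S' - S² = 0 with S(a) = 0 at some point a. Then every eigenvalue λ of S, satisfying λ' = λ² - e†Ve with e the corresponding unit eigenvector and e†Ve > 0, remains bounded above and below for all x; hence S is bounded everywhere. -/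
open Matrix
open scoped ComplexOrder

open Filter Set Topology in
private lemma riccati_upper_aux (f q : ℝ → ℝ) (M : ℝ) (hM : 0 < M)
    (hf : ∀ x, HasDerivAt f (f x ^ 2 - q x) x)
    (hqM : ∀ x, q x ≤ M) : ∀ x, f x ≤ Real.sqrt M := by
  by_contra hcon
  push_neg at hcon
  obtain ⟨x₀, hx₀⟩ := hcon
  set s := Real.sqrt M with hs_def
  have hs : 0 < s := Real.sqrt_pos.2 hM
  have hs2 : s ^ 2 = M := Real.sq_sqrt hM.le
  set c := (s + f x₀) / 2 with hc_def
  have hc1 : s < c := by rw [hc_def]; linarith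
  have hc2 : c < f x₀ := by rw [hc_def]; linarith
  have hcpos : 0 < c := hs.trans hc1
  have hMc : M < c ^ 2 := by nlinarith
  have hfc : Continuous f := by
    rw [continuous_iff_continuousAt]; exact fun x => (hf x).continuousAt
  -- Step 1: f stays ≥ c on [x₀, ∞)
  have key : ∀ x, x₀ ≤ x → c ≤ f x := by
    by_contra hk
    push_neg at hk
    obtain ⟨x₁, hx₁, hfx₁⟩ := hk
    set A : Set ℝ := {x | x₀ ≤ x ∧ f x ≤ c} with hA_def
    have hA1 : x₁ ∈ A := ⟨hx₁, hfx₁.le⟩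
    have hAne : A.Nonempty := ⟨x₁, hA1⟩
    have hAbdd : BddBelow A := ⟨x₀, fun y hy => hy.1⟩
    have hAcl : IsClosed A := by
      have : A = Ici x₀ ∩ f ⁻¹' (Iic c) := by
        ext y
        simp only [hA_def, mem_setOf_eq, mem_inter_iff, mem_Ici, mem_preimage, mem_Iic]
      rw [this]
      exact isClosed_Ici.inter (isClosed_Iic.preimage hfc)
    set t := sInf A with ht_def
    have htA : t ∈ A := hAcl.csInf_mem hAne hAbdd
    have htx₀ : x₀ < t := by
      rcases lt_or_eq_of_le htA.1 with h | h
      · exact h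
      · exfalso; rw [← h] at htA; linarith [htA.2]
    have hlt : ∀ x, x₀ ≤ x → x < t → c < f x := by
      intro x hx hxt
      by_contra hcx
      push_neg at hcx
      exact absurd (csInf_le hAbdd ⟨hx, hcx⟩) (not_le.2 hxt)
    -- f t = c
    have hft : f t = c := by
      refine le_antisymm htA.2 ?_
      have hne : (𝓝[<] t).NeBot := inferInstance
      have htend : Tendsto f (𝓝[<] t) (𝓝 (f t)) :=
        (hfc.continuousAt.tendsto).mono_left nhdsWithin_le_nhds
      refine ge_of_tendsto htend ?_
      filter_upwards [Ioo_mem_nhdsLT_of_mem ⟨htx₀, le_refl t⟩] with y hy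
      exact (hlt y hy.1.le hy.2).le
    -- derivative at t is positive, but left slope is nonpositive
    have hd : 0 < f t ^ 2 - q t := by rw [hft]; linarith [hqM t]
    have hslope := hasDerivAt_iff_tendsto_slope.1 (hf t)
    have hslope' : Tendsto (slope f t) (𝓝[<] t) (𝓝 (f t ^ 2 - q t)) :=
      hslope.mono_left (nhdsWithin_mono t fun y hy => ne_of_lt hy)
    have hev : ∀ᶠ y in 𝓝[<] t, 0 < slope f t y :=
      hslope'.eventually (eventually_gt_nhds hd)
    have hev2 : ∀ᶠ y in 𝓝[<] t, y ∈ Ioo x₀ t :=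
      Ioo_mem_nhdsLT_of_mem ⟨htx₀, le_refl t⟩
    obtain ⟨y, hy1, hy2⟩ := (hev.and hev2).exists
    have : slope f t y < 0 := by
      rw [slope_def_field]
      have hnum : 0 < f y - f t := by rw [hft]; linarith [hlt y hy2.1.le hy2.2]
      have hden : y - t < 0 := by linarith [hy2.2]
      exact div_neg_of_pos_of_neg hnum hden
    linarith
  -- Step 2: -(1/f) grows linearly on [x₀, ∞), contradiction with sign
  set δ : ℝ := 1 - M / c ^ 2 with hδ_def
  have hδ : 0 < δ := by
    rw [hδ_def]
    have : M / c ^ 2 < 1 := (div_lt_one (by positivity)).2 hMc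
    linarith
  set F : ℝ → ℝ := fun x => -(f x)⁻¹ - δ * x with hF_def
  have hFd : ∀ x ∈ Ici x₀, HasDerivAt F ((f x ^ 2 - q x) / f x ^ 2 - δ) x := by
    intro x hx
    have hfx : f x ≠ 0 := ne_of_gt (hcpos.trans_le (key x hx))
    have h1 : HasDerivAt (fun y => (f y)⁻¹) (-(f x ^ 2 - q x) / f x ^ 2) x :=
      (hf x).inv hfx
    have h2 : HasDerivAt (fun y => -(f y)⁻¹) ((f x ^ 2 - q x) / f x ^ 2) x := by
      have h2' : HasDerivAt (fun y => -(f y)⁻¹) (-(-(f x ^ 2 - q x) / f x ^ 2)) x := h1.neg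
      convert h2' using 1
      ring
    have h3 : HasDerivAt F ((f x ^ 2 - q x) / f x ^ 2 - δ * 1) x :=
      h2.sub ((hasDerivAt_id x).const_mul δ)
    simpa using h3
  have hFmono : MonotoneOn F (Ici x₀) := by
    apply monotoneOn_of_deriv_nonneg (convex_Ici x₀)
    · exact fun x hx => ((hFd x hx).continuousAt).continuousWithinAt
    · intro x hx
      rw [interior_Ici] at hx
      exact (hFd x (Set.mem_Ici.2 (le_of_lt hx))).differentiableAt.differentiableWithinAt
    · intro x hx
      rw [interior_Ici] at hx
      rw [(hFd x (Set.mem_Ici.2 (le_of_lt hx))).deriv]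
      have hcf : c ≤ f x := key x hx.le
      have hf2 : c ^ 2 ≤ f x ^ 2 := by nlinarith
      have hq : q x / f x ^ 2 ≤ M / c ^ 2 :=
        div_le_div₀ hM.le (hqM x) (by positivity) hf2
      have hfx2 : 0 < f x ^ 2 := by nlinarith
      have hrw : (f x ^ 2 - q x) / f x ^ 2 = 1 - q x / f x ^ 2 := by
        rw [sub_div, div_self (ne_of_gt hfx2)]
      rw [hrw, hδ_def]
      linarith
  -- evaluate at a far point
  have hfx₀pos : 0 < f x₀ := hcpos.trans hc2
  set y : ℝ := x₀ + ((f x₀)⁻¹ + 1) / δ with hy_def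
  have hxy : x₀ ≤ y := by
    have h0 : 0 ≤ ((f x₀)⁻¹ + 1) / δ := by positivity
    rw [hy_def]; linarith
  have hFle : F x₀ ≤ F y := hFmono (self_mem_Ici) hxy hxy
  have hδne : δ ≠ 0 := ne_of_gt hδ
  have hδy : δ * (y - x₀) = (f x₀)⁻¹ + 1 := by
    rw [hy_def]
    field_simp
    ring
  have h1 : (1 : ℝ) ≤ -(f y)⁻¹ := by
    have : -(f x₀)⁻¹ - δ * x₀ ≤ -(f y)⁻¹ - δ * y := hFle
    nlinarith [hδy]
  have hfy : 0 < f y := hcpos.trans_le (key y hxy)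
  have : 0 < (f y)⁻¹ := by positivity
  linarith

/-- Appendix E: for positive definite bounded Hermitian `V`, a Hermitian
Riccati solution `S` of `V + S' - S² = 0` vanishing at a point has all its eigenvalue
paths `lam` (obeying `lam' = lam² - e†Ve` with `e†Ve > 0`) bounded above and below. -/
theorem eigenvalue_bounded_for_posdef_potential (n : ℕ) (a : ℝ)
    (V S S' : ℝ → Matrix (Fin n) (Fin n) ℂ)
    (hVpos : ∀ x, (V x).PosDef)
    (hVc : ∀ i j, Continuous fun t => V t i j)
    (hVbdd : ∃ C : ℝ, ∀ x i j, ‖V x i j‖ ≤ C)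
    (hSherm : ∀ x, (S x).IsHermitian)
    (hSd : ∀ i j, ∀ x : ℝ, HasDerivAt (fun t => S t i j) (S' x i j) x)
    (heq : ∀ x : ℝ, V x + S' x - S x * S x = 0)
    (hSa : S a = 0)
    (lam lam' : ℝ → ℝ) (e : ℝ → Fin n → ℂ)
    (heig : ∀ x : ℝ, S x *ᵥ e x = (lam x : ℂ) • e x)
    (hunit : ∀ x : ℝ, star (e x) ⬝ᵥ e x = 1)
    (hld : ∀ x : ℝ, HasDerivAt lam (lam' x) x)
    (hleq : ∀ x : ℝ, lam' x = lam x ^ 2 - (star (e x) ⬝ᵥ (V x *ᵥ e x)).re)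
    (hpos : ∀ x : ℝ, 0 < (star (e x) ⬝ᵥ (V x *ᵥ e x)).re) :
    ∃ c C : ℝ, ∀ x : ℝ, c ≤ lam x ∧ lam x ≤ C := by
  obtain ⟨C, hC⟩ := hVbdd
  set q : ℝ → ℝ := fun x => (star (e x) ⬝ᵥ (V x *ᵥ e x)).re with hq_def
  -- n > 0, else the unit condition is contradictory
  rcases Nat.eq_zero_or_pos n with hn | hn
  · exfalso
    have h0 := hunit 0
    have hempty : IsEmpty (Fin n) := by rw [hn]; infer_instance
    rw [dotProduct] at h0
    simp [Finset.univ_eq_empty] at h0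
  have hC0 : 0 ≤ C := le_trans (norm_nonneg _) (hC 0 ⟨0, hn⟩ ⟨0, hn⟩)
  -- each entry of the unit eigenvector has modulus ≤ 1
  have he1 : ∀ x i, ‖e x i‖ ≤ 1 := by
    intro x i
    have h := congrArg Complex.re (hunit x)
    rw [dotProduct] at h
    simp only [Pi.star_apply, Complex.re_sum] at h
    have hterm : ∀ j, (star (e x j) * e x j).re = ‖e x j‖ ^ 2 := by
      intro j
      rw [Complex.sq_norm, Complex.star_def, Complex.mul_re, Complex.normSq_apply]
      simp
    rw [Finset.sum_congr rfl (fun j _ => hterm j)] at h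
    have hle : ‖e x i‖ ^ 2 ≤ 1 := by
      have hs : ‖e x i‖ ^ 2 ≤ ∑ j, ‖e x j‖ ^ 2 :=
        Finset.single_le_sum (f := fun j => ‖e x j‖ ^ 2)
          (fun j _ => by positivity) (Finset.mem_univ i)
      rw [Complex.one_re] at h
      linarith
    nlinarith [norm_nonneg (e x i)]
  -- uniform bound on q
  set M : ℝ := (n : ℝ) ^ 2 * C + 1 with hM_def
  have hM : 0 < M := by
    have : 0 ≤ (n : ℝ) ^ 2 * C := by positivity
    rw [hM_def]; linarith
  have hqM : ∀ x, q x ≤ M := by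
    intro x
    have h1 : q x ≤ ‖star (e x) ⬝ᵥ (V x *ᵥ e x)‖ := Complex.re_le_norm _
    have h2 : ‖star (e x) ⬝ᵥ (V x *ᵥ e x)‖ ≤ (n : ℝ) * ((n : ℝ) * C) := by
      rw [dotProduct]
      refine le_trans (norm_sum_le _ _) ?_
      have hrow : ∀ i, ‖star (e x) i * (V x *ᵥ e x) i‖ ≤ (n : ℝ) * C := by
        intro i
        rw [norm_mul]
        have hsi : ‖star (e x) i‖ ≤ 1 := by
          simpa using he1 x i
        have hwi : ‖(V x *ᵥ e x) i‖ ≤ (n : ℝ) * C := by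
          rw [mulVec, dotProduct]
          refine le_trans (norm_sum_le _ _) ?_
          have : ∀ j, ‖V x i j * e x j‖ ≤ C := by
            intro j
            rw [norm_mul]
            calc ‖V x i j‖ * ‖e x j‖
                ≤ C * 1 := mul_le_mul (hC x i j) (he1 x j) (norm_nonneg _) hC0
              _ = C := mul_one C
          calc ∑ j, ‖V x i j * e x j‖ ≤ ∑ _j : Fin n, C :=
                Finset.sum_le_sum (fun j _ => this j)
            _ = (n : ℝ) * C := by simp [mul_comm]
        calc ‖star (e x) i‖ * ‖(V x *ᵥ e x) i‖
            ≤ 1 * ((n : ℝ) * C) :=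
              mul_le_mul hsi hwi (norm_nonneg _) zero_le_one
          _ = (n : ℝ) * C := one_mul _
      calc ∑ i, ‖star (e x) i * (V x *ᵥ e x) i‖
          ≤ ∑ _i : Fin n, (n : ℝ) * C := Finset.sum_le_sum (fun i _ => hrow i)
        _ = (n : ℝ) * ((n : ℝ) * C) := by simp [mul_comm]
    rw [hM_def]
    nlinarith
  -- upper bound
  have hfd : ∀ x, HasDerivAt lam (lam x ^ 2 - q x) x := fun x => hleq x ▸ hld x
  have hup : ∀ x, lam x ≤ Real.sqrt M := riccati_upper_aux lam q M hM hfd hqM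
  -- lower bound via reflection
  set g : ℝ → ℝ := fun x => -lam (-x) with hg_def
  have hgd : ∀ x, HasDerivAt g (g x ^ 2 - q (-x)) x := by
    intro x
    have h1 : HasDerivAt (fun y : ℝ => lam (-y)) (lam' (-x) * (-1)) x :=
      (hld (-x)).comp x (hasDerivAt_neg x)
    have h2 : HasDerivAt (fun y => -lam (-y)) (-(lam' (-x) * (-1))) x := h1.neg
    convert h2 using 1
    rw [hleq (-x), hg_def]
    ring
  have hlow : ∀ x, g x ≤ Real.sqrt M :=
    riccati_upper_aux g (fun x => q (-x)) M hM hgd (fun x => hqM (-x))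
  refine ⟨-Real.sqrt M, Real.sqrt M, fun x => ⟨?_, hup x⟩⟩
  have := hlow (-x)
  rw [hg_def] at this
  simp only [neg_neg] at this
  linarith
end
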